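/- arXiv:2407.21741 — 10 statements merged into one kernel-verified Lean document; each statement's English description precedes it below -/
import Mathlib

section
/- A linearly topologized vector space V over a discrete field k is a Tate vector space if and only if V is a topological direct sum V = L ⊕ D of a complete c-lattice L and a d-lattice D; that is, there exist closed linear subspaces L, D ⊆ V with L ∩ D = {0} and L + D = V such that the addition map L × D → V is a topological isomorphism, where L is open, complete with respect to the induced uniformity, and linearly bounded, and D is discrete in the induced topology. -/
open Filter Topology

/-- A linearly topologized vector space over a discrete field `k`: the neighborhood
filter of `0` has a basis consisting of open linear subspaces. -/
def IsLinearlyTopologized (k V : Type*) [Field k] [AddCommGroup V] [Module k V]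
    [TopologicalSpace V] : Prop :=
  (nhds (0 : V)).HasBasis (fun U : Submodule k V => IsOpen (U : Set V))
    (fun U => (U : Set V))

/-- `L` is linearly bounded if `L/(L ∩ U)` is finite dimensional for every open linear
subspace `U`. -/
def LinearlyBounded (k : Type*) {V : Type*} [Field k] [AddCommGroup V] [Module k V]
    [TopologicalSpace V] (L : Submodule k V) : Prop :=
  ∀ U : Submodule k V, IsOpen (U : Set V) →
    FiniteDimensional k (↥L ⧸ (U.comap L.subtype))

/-- A linear subspace is linearly compact if it is closed, complete with respect to the
induced uniformity, and linearly bounded. -/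
def LinearlyCompact (k : Type*) {V : Type*} [Field k] [AddCommGroup V] [Module k V]
    [UniformSpace V] (L : Submodule k V) : Prop :=
  IsClosed (L : Set V) ∧ IsComplete (L : Set V) ∧ LinearlyBounded k L

/-- A linearly topologized vector space is a Tate vector space if it is complete and
admits a c-lattice, i.e. an open linearly compact linear subspace. -/
def IsTate (k V : Type*) [Field k] [AddCommGroup V] [Module k V] [UniformSpace V] : Prop :=
  CompleteSpace V ∧ ∃ L : Submodule k V, IsOpen (L : Set V) ∧ LinearlyCompact k L


/-- Any uniform additive group with discrete topology is complete. -/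
theorem completeSpace_of_discrete_uniformAddGroup {G : Type*} [AddGroup G] [UniformSpace G]
    [IsUniformAddGroup G] [DiscreteTopology G] : CompleteSpace G := by
  constructor
  intro f hf
  have hsub : {p : G × G | p.2 - p.1 = 0} ∈ uniformity G := by
    rw [uniformity_eq_comap_nhds_zero G, nhds_discrete]
    exact Filter.mem_comap.2 ⟨{0}, mem_pure.2 rfl, fun p hp => hp⟩
  have := hf.2 hsub
  rw [Filter.mem_prod_iff] at this
  obtain ⟨A, hA, B, hB, hAB⟩ := this
  have hne : (A ∩ B).Nonempty := by
    have := hf.1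
    exact Filter.nonempty_of_mem (Filter.inter_mem hA hB)
  obtain ⟨x, hxA, hxB⟩ := hne
  refine ⟨x, ?_⟩
  have hx : {x} ∈ f := by
    have hsubs : A ∩ B ⊆ {x} := by
      intro y ⟨hyA, hyB⟩
      have : (x, y) ∈ A ×ˢ B := ⟨hxA, hyB⟩
      have := hAB this
      simp only [Set.mem_setOf_eq, sub_eq_zero] at this
      simp [this]
    exact Filter.mem_of_superset (Filter.inter_mem hA hB) hsubs
  have : f ≤ pure x := by
    intro s hs
    exact Filter.mem_of_superset hx (by simpa using hs)
  exact this.trans (pure_le_nhds x)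

/-- A linearly topologized vector space `V` over a discrete field is a Tate vector space
if and only if it is a topological direct sum `V = L ⊕ D` of a complete c-lattice `L`
(an open, complete, linearly bounded closed subspace) and a d-lattice `D` (a closed
subspace which is discrete in the induced topology): the addition map `L × D → V` is a
topological isomorphism. -/
theorem isTate_iff_topological_direct_sum
    {k : Type*} [Field k] [TopologicalSpace k] [DiscreteTopology k]
    {V : Type*} [AddCommGroup V] [Module k V] [UniformSpace V]
    [IsUniformAddGroup V] [ContinuousSMul k V] [T2Space V]
    (hV : IsLinearlyTopologized k V) :
    IsTate k V ↔
      ∃ L D : Submodule k V,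
        IsClosed (L : Set V) ∧ IsClosed (D : Set V) ∧
        L ⊓ D = ⊥ ∧ L ⊔ D = ⊤ ∧
        Function.Bijective (fun p : ↥L × ↥D => (p.1 : V) + (p.2 : V)) ∧
        Continuous (fun p : ↥L × ↥D => (p.1 : V) + (p.2 : V)) ∧
        IsOpenMap (fun p : ↥L × ↥D => (p.1 : V) + (p.2 : V)) ∧
        IsOpen (L : Set V) ∧ IsComplete (L : Set V) ∧ LinearlyBounded k L ∧
        DiscreteTopology ↥D := by
  constructor
  · rintro ⟨hcomp, L, hLopen, hLclosed, hLcompl, hLbdd⟩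
    obtain ⟨D, hD⟩ := L.exists_isCompl
    have hinf : L ⊓ D = ⊥ := hD.inf_eq_bot
    have hsup : L ⊔ D = ⊤ := hD.sup_eq_top
    -- D is discrete
    haveI hDdisc : DiscreteTopology ↥D := by
      rw [discreteTopology_iff_isOpen_singleton_zero]
      have : ({0} : Set ↥D) = Subtype.val ⁻¹' (L : Set V) := by
        ext x
        simp only [Set.mem_singleton_iff, Set.mem_preimage, SetLike.mem_coe]
        constructor
        · rintro rfl; exact L.zero_mem
        · intro hx
          have : (x : V) ∈ L ⊓ D := ⟨hx, x.2⟩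
          rw [hinf] at this
          exact Subtype.ext (by simpa using this)
      rw [this]
      exact hLopen.preimage continuous_subtype_val
    -- D is closed
    have hDclosed : IsClosed (D : Set V) := by
      haveI : DiscreteTopology ↥D.toAddSubgroup := hDdisc
      have : IsClosed (D.toAddSubgroup : Set V) := AddSubgroup.isClosed_of_discrete
      exact this
    -- bijective
    have hbij : Function.Bijective (fun p : ↥L × ↥D => (p.1 : V) + (p.2 : V)) := by
      have := (Submodule.prodEquivOfIsCompl L D hD).bijective
      convert this using 1
      exact funext fun x => (Submodule.coe_prodEquivOfIsCompl' L D hD x).symm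
    have hcont : Continuous (fun p : ↥L × ↥D => (p.1 : V) + (p.2 : V)) :=
      (continuous_subtype_val.comp continuous_fst).add
        (continuous_subtype_val.comp continuous_snd)
    have hopen : IsOpenMap (fun p : ↥L × ↥D => (p.1 : V) + (p.2 : V)) := by
      intro W hW
      rw [isOpen_iff_forall_mem_open]
      rintro v ⟨⟨l, d⟩, hpW, rfl⟩
      rw [isOpen_prod_iff] at hW
      obtain ⟨u, t, hu, ht, hlu, hdt, hut⟩ := hW l d hpW
      refine ⟨(fun x => x + (d : V)) '' (Subtype.val '' u), ?_, ?_, ?_⟩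
      · rintro x ⟨y, ⟨l', hl'u, rfl⟩, rfl⟩
        exact ⟨(l', d), hut ⟨hl'u, hdt⟩, rfl⟩
      · exact (isOpenMap_add_right (d : V)) _ (hLopen.isOpenMap_subtype_val u hu)
      · exact ⟨(l : V), ⟨l, hlu, rfl⟩, rfl⟩
    exact ⟨L, D, hLclosed, hDclosed, hinf, hsup, hbij, hcont, hopen, hLopen, hLcompl,
      hLbdd, hDdisc⟩
  · rintro ⟨L, D, hLc, hDc, hinf, hsup, hbij, hcont, hopen, hLo, hLcomp, hLb, hDdisc⟩
    refine ⟨?_, L, hLo, hLc, hLcomp, hLb⟩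
    haveI : CompleteSpace ↥L := completeSpace_coe_iff_isComplete.2 hLcomp
    haveI : IsUniformAddGroup ↥L := L.toAddSubgroup.isUniformAddGroup
    haveI : IsUniformAddGroup ↥D := D.toAddSubgroup.isUniformAddGroup
    haveI : CompleteSpace ↥D := completeSpace_of_discrete_uniformAddGroup
    set f := fun p : ↥L × ↥D => (p.1 : V) + (p.2 : V) with hf
    let φ : (↥L × ↥D) ≃+ V :=
      { Equiv.ofBijective f hbij with
        map_add' := by
          intro p q
          show f (p + q) = f p + f q
          simp only [hf, Prod.fst_add, Prod.snd_add, Submodule.coe_add]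
          abel }
    let h : (↥L × ↥D) ≃ₜ V :=
      Equiv.toHomeomorphOfContinuousOpen (Equiv.ofBijective f hbij) hcont hopen
    have hinvcont : Continuous φ.symm := h.symm.continuous
    let ue : (↥L × ↥D) ≃ᵤ V :=
      { φ.toEquiv with
        uniformContinuous_toFun :=
          uniformContinuous_addMonoidHom_of_continuous (f := φ.toAddMonoidHom) hcont
        uniformContinuous_invFun :=
          uniformContinuous_addMonoidHom_of_continuous (f := φ.symm.toAddMonoidHom) hinvcont }
    exact ue.completeSpace_iff.1 inferInstance
end

section
/- Let A and B be linearly topologized vector spaces over a discrete field k. If A is discrete and B is linearly compact (i.e., B is complete and every open linear subspace of B has finite codimension), then Hom(A,B) with the compact-open topology is linearly compact: it is complete and every open linear subspace of Hom(A,B) has finite codimension. -/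
open Filter Topology

/-- The compact-open topology on the space `A →L[k] B` of continuous linear maps: the
neighborhood filter of `0` has as basis the subspaces
`S_{K,W} = {f | f(K) ⊆ W}` for `K ⊆ A` linearly compact and `W ⊆ B` open linear. -/
def IsCompactOpenTopology (k : Type*) {A B : Type*} [Field k] [TopologicalSpace k]
    [AddCommGroup A] [Module k A] [UniformSpace A]
    [AddCommGroup B] [Module k B] [TopologicalSpace B]
    [TopologicalSpace (A →L[k] B)] : Prop :=
  (nhds (0 : A →L[k] B)).HasBasis
    (fun p : Submodule k A × Submodule k B =>
      LinearlyCompact k p.1 ∧ IsOpen ((p.2 : Set B)))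
    (fun p => {f : A →L[k] B | ∀ x ∈ p.1, f x ∈ p.2})

private lemma aux_isComplete_discrete {A : Type*} [AddCommGroup A] [UniformSpace A]
    [IsUniformAddGroup A] [DiscreteTopology A] (s : Set A) : IsComplete s := by
  intro f hf hfs
  have hU : uniformity A = 𝓟 SetRel.id := by
    rw [uniformity_eq_comap_nhds_zero, nhds_discrete, Filter.comap_pure]
    congr 1
    ext p
    simp [SetRel.id, sub_eq_zero, eq_comm]
  have hid : SetRel.id ∈ f ×ˢ f := hf.2 (by rw [hU]; exact mem_principal_self _)
  rcases Filter.mem_prod_iff.mp hid with ⟨U, hU1, V, hV1, hUV⟩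
  have ht : U ∩ V ∈ f := inter_mem hU1 hV1
  obtain ⟨x, hx⟩ := hf.1.nonempty_of_mem ht
  have hsub : U ∩ V ⊆ {x} := by
    intro y hy
    have h1 : (x, y) ∈ SetRel.id := hUV (Set.mk_mem_prod hx.1 hy.2)
    simp only [SetRel.mem_id] at h1
    simp [h1]
  have hxf : {x} ∈ f := mem_of_superset ht hsub
  have hxs : x ∈ s := by
    obtain ⟨y, hy1, hy2⟩ := hf.1.nonempty_of_mem (inter_mem hxf (hfs (mem_principal_self s)))
    rwa [Set.mem_singleton_iff.mp hy1] at hy2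
  exact ⟨x, hxs, le_trans (Filter.le_pure_iff.mpr hxf) (pure_le_nhds x)⟩

private lemma aux_findim_of_linCompact {k A : Type*} [Field k] [AddCommGroup A] [Module k A]
    [UniformSpace A] [DiscreteTopology A] {K : Submodule k A} (hK : LinearlyCompact k K) :
    FiniteDimensional k K := by
  have h := hK.2.2 ⊥ (isOpen_discrete _)
  have hbot : Submodule.comap K.subtype (⊥ : Submodule k A) = ⊥ := by
    simp
  rw [hbot] at h
  exact (Submodule.quotEquivOfEqBot (⊥ : Submodule k K) rfl).finiteDimensional

private lemma aux_spanSingleton_linCompact {k A : Type*} [Field k] [AddCommGroup A] [Module k A]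
    [UniformSpace A] [IsUniformAddGroup A] [DiscreteTopology A] (a : A) :
    LinearlyCompact k (Submodule.span k {a}) := by
  refine ⟨isClosed_discrete _, aux_isComplete_discrete _, fun U hU => ?_⟩
  haveI : FiniteDimensional k (Submodule.span k ({a} : Set A)) :=
    FiniteDimensional.span_of_finite k (Set.finite_singleton a)
  infer_instance

/-- If `A` is discrete and `B` is linearly compact (complete, with every open linear
subspace of finite codimension), then `Hom(A,B)` with the compact-open topology is
linearly compact: complete, with every open linear subspace of finite codimension. -/
theorem hom_linearlyCompact_of_discrete_linearlyCompact
    {k : Type*} [Field k] [TopologicalSpace k] [DiscreteTopology k]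
    {A : Type*} [AddCommGroup A] [Module k A] [UniformSpace A]
    [IsUniformAddGroup A] [ContinuousSMul k A] [T2Space A]
    {B : Type*} [AddCommGroup B] [Module k B] [UniformSpace B]
    [IsUniformAddGroup B] [ContinuousSMul k B] [T2Space B]
    (hA : IsLinearlyTopologized k A) (hB : IsLinearlyTopologized k B)
    (hAdiscrete : DiscreteTopology A)
    (hBcomplete : CompleteSpace B)
    (hBcompact : ∀ U : Submodule k B, IsOpen (U : Set B) → FiniteDimensional k (B ⧸ U))
    [UniformSpace (A →L[k] B)] [IsUniformAddGroup (A →L[k] B)]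
    (hco : IsCompactOpenTopology k (A := A) (B := B)) :
    CompleteSpace (A →L[k] B) ∧
      ∀ U : Submodule k (A →L[k] B), IsOpen (U : Set (A →L[k] B)) →
        FiniteDimensional k ((A →L[k] B) ⧸ U) := by
  haveI := hAdiscrete
  haveI := hBcomplete
  constructor
  · -- completeness
    constructor
    intro F hF
    haveI : F.NeBot := hF.1
    -- pointwise Cauchy
    have hCau : ∀ a : A, Cauchy (Filter.map (fun f : A →L[k] B => f a) F) := by
      intro a
      refine ⟨hF.1.map _, ?_⟩
      rw [Filter.prod_map_map_eq, uniformity_eq_comap_nhds_zero,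
        Filter.map_le_iff_le_comap, Filter.comap_comap, ← Filter.map_le_iff_le_comap]
      have htend : Tendsto (fun p : (A →L[k] B) × (A →L[k] B) => p.2 a - p.1 a)
          (F ×ˢ F) (𝓝 (0 : B)) := by
        rw [hB.tendsto_right_iff]
        intro W hWo
        have hS : {f : A →L[k] B | ∀ x ∈ Submodule.span k ({a} : Set A), f x ∈ W} ∈
            𝓝 (0 : A →L[k] B) :=
          hco.mem_of_mem (i := (Submodule.span k {a}, W))
            ⟨aux_spanSingleton_linCompact a, hWo⟩
        have h2 : {p : (A →L[k] B) × (A →L[k] B) |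
            ∀ x ∈ Submodule.span k ({a} : Set A), (p.2 - p.1) x ∈ W} ∈ F ×ˢ F := by
          have h3 := hF.2
          rw [uniformity_eq_comap_nhds_zero] at h3
          exact h3 (Filter.preimage_mem_comap hS)
        filter_upwards [h2] with p hp
        have := hp a (Submodule.mem_span_singleton_self a)
        simpa using this
      exact htend
    choose b hb using fun a => CompleteSpace.complete (hCau a)
    have hb' : ∀ a : A, Tendsto (fun f : A →L[k] B => f a) F (𝓝 (b a)) := hb
    have hadd : ∀ x y : A, b (x + y) = b x + b y := by
      intro x y
      refine tendsto_nhds_unique (hb' (x + y)) ?_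
      exact ((hb' x).add (hb' y)).congr (fun f => (map_add f x y).symm)
    have hsmul : ∀ (c : k) (x : A), b (c • x) = c • b x := by
      intro c x
      refine tendsto_nhds_unique (hb' (c • x)) ?_
      exact ((hb' x).const_smul c).congr (fun f => (map_smul f c x).symm)
    let G : A →L[k] B :=
      { toFun := b
        map_add' := hadd
        map_smul' := hsmul
        cont := continuous_of_discreteTopology }
    have htend : Tendsto (fun f : A →L[k] B => f - G) F (𝓝 0) := by
      rw [hco.tendsto_right_iff]
      rintro ⟨K, W⟩ ⟨hKc, hWo⟩
      haveI : FiniteDimensional k K := aux_findim_of_linCompact hKc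
      obtain ⟨s, hs⟩ : K.FG := (Submodule.fg_iff_finiteDimensional K).mpr ‹_›
      have key : ∀ x ∈ s, ∀ᶠ f : (A →L[k] B) in F, f x - b x ∈ W := by
        intro x _
        have h1 : Tendsto (fun f : A →L[k] B => f x - b x) F (𝓝 0) :=
          tendsto_sub_nhds_zero_iff.mpr (hb' x)
        exact h1 (hWo.mem_nhds W.zero_mem)
      filter_upwards [(Filter.eventually_all_finset s).mpr key] with f hf
      intro x hxK
      have hle : K ≤ Submodule.comap ((f - G : A →L[k] B) : A →ₗ[k] B) W := by
        rw [← hs, Submodule.span_le]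
        intro y hy
        simpa [G] using hf y hy
      exact hle hxK
    refine ⟨G, ?_⟩
    have h := tendsto_sub_nhds_zero_iff.mp htend
    rwa [show (fun f : A →L[k] B => f) = id from rfl, Filter.tendsto_id'] at h
  · -- finite codimension
    intro U hUopen
    have hU0 : (U : Set (A →L[k] B)) ∈ 𝓝 (0 : A →L[k] B) := hUopen.mem_nhds U.zero_mem
    rw [hco.mem_iff] at hU0
    obtain ⟨⟨K, W⟩, ⟨hKc, hWo⟩, hSU⟩ := hU0
    haveI : FiniteDimensional k K := aux_findim_of_linCompact hKc
    haveI : FiniteDimensional k (B ⧸ W) := hBcompact W hWo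
    let φ : (A →L[k] B) →ₗ[k] (K →ₗ[k] B ⧸ W) :=
      { toFun := fun f => W.mkQ.comp (((f : A →ₗ[k] B)).comp K.subtype)
        map_add' := by intro f g; ext x; simp
        map_smul' := by intro c f; ext x; simp }
    have hker : ∀ f : A →L[k] B, f ∈ LinearMap.ker φ ↔ ∀ x ∈ K, f x ∈ W := by
      intro f
      constructor
      · intro hf x hx
        have h1 := LinearMap.congr_fun (LinearMap.mem_ker.mp hf) ⟨x, hx⟩
        simpa [φ, Submodule.Quotient.mk_eq_zero] using h1
      · intro h
        rw [LinearMap.mem_ker]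
        ext x
        simpa [φ, Submodule.Quotient.mk_eq_zero] using h x x.2
    haveI : FiniteDimensional k ((A →L[k] B) ⧸ LinearMap.ker φ) :=
      Module.Finite.equiv (LinearMap.quotKerEquivRange φ).symm
    have hle : LinearMap.ker φ ≤ Submodule.comap (LinearMap.id) U := by
      intro f hf
      exact hSU ((hker f).mp hf)
    refine Module.Finite.of_surjective (Submodule.mapQ _ _ LinearMap.id hle) ?_
    intro x
    obtain ⟨f, rfl⟩ := Submodule.mkQ_surjective U x
    exact ⟨Submodule.Quotient.mk f, by simp [Submodule.mapQ_apply]⟩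
end

section
/- Let A be a Tate vector space and B any linearly topologized vector space over a discrete field k. Then the set of continuous linear maps A → B of finite rank (i.e., with finite dimensional image) is dense in Hom(A,B) with the compact-open topology. -/
open Filter Topology

/-- If `A` is a Tate vector space, then the continuous linear maps of finite rank are
dense in `Hom(A,B)` with the compact-open topology. -/
theorem finiteRank_dense_in_hom
    {k : Type*} [Field k] [TopologicalSpace k] [DiscreteTopology k]
    {A : Type*} [AddCommGroup A] [Module k A] [UniformSpace A]
    [IsUniformAddGroup A] [ContinuousSMul k A] [T2Space A]
    {B : Type*} [AddCommGroup B] [Module k B] [TopologicalSpace B]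
    [IsTopologicalAddGroup B] [ContinuousSMul k B] [T2Space B]
    (hA : IsLinearlyTopologized k A) (hB : IsLinearlyTopologized k B)
    (hTate : IsTate k A)
    [TopologicalSpace (A →L[k] B)] [IsTopologicalAddGroup (A →L[k] B)]
    (hco : IsCompactOpenTopology k (A := A) (B := B)) :
    Dense {f : A →L[k] B | FiniteDimensional k ↥(LinearMap.range (f : A →ₗ[k] B))} := by
  rw [dense_iff_closure_eq, Set.eq_univ_iff_forall]
  intro f
  have hbf : (𝓝 f).HasBasis
      (fun p : Submodule k A × Submodule k B =>
        LinearlyCompact k p.1 ∧ IsOpen ((p.2 : Set B)))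
      (fun p => (f + ·) '' {g : A →L[k] B | ∀ x ∈ p.1, g x ∈ p.2}) := by
    rw [← map_add_left_nhds_zero f]
    exact hco.map _
  rw [mem_closure_iff_nhds_basis hbf]
  rintro ⟨K, W⟩ ⟨hK, hW⟩
  -- J := preimage of W under f, an open submodule of A
  set J : Submodule k A := W.comap (f : A →ₗ[k] B) with hJ
  have hJopen : IsOpen (J : Set A) := hW.preimage f.continuous
  -- K / (K ∩ J) is finite dimensional since K is linearly bounded
  have hfd : FiniteDimensional k (↥K ⧸ (J.comap K.subtype)) := hK.2.2 J hJopen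
  -- choose a complement S₀ of K ∩ J inside K
  obtain ⟨S₀, hS₀⟩ := (J.comap K.subtype).exists_isCompl
  have hS₀fd : FiniteDimensional k S₀ :=
    LinearEquiv.finiteDimensional (Submodule.quotientEquivOfIsCompl _ _ hS₀)
  -- S' := image of S₀ in A
  set S' : Submodule k A := S₀.map K.subtype with hS'
  have hS'fd : FiniteDimensional k S' := by
    rw [hS']; infer_instance
  -- every x ∈ K is s' + j with s' ∈ S', j ∈ J
  have hdec : ∀ x ∈ K, ∃ s' ∈ S', x - s' ∈ J := by
    intro x hx
    have : (⟨x, hx⟩ : ↥K) ∈ (J.comap K.subtype) ⊔ S₀ := by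
      rw [hS₀.sup_eq_top]; trivial
    obtain ⟨t, ht, s, hs, hts⟩ := Submodule.mem_sup.1 this
    refine ⟨(s : A), ⟨s, hs, rfl⟩, ?_⟩
    have : x - (s : A) = (t : A) := by
      have := congrArg (K.subtype) hts
      simp only [map_add, Submodule.subtype_apply] at this
      rw [← this]; abel
    rw [this]; exact ht
  have hS'J : S' ⊓ J = ⊥ := by
    rw [eq_bot_iff]
    rintro x ⟨⟨s, hs, rfl⟩, hxJ⟩
    have : s ∈ (J.comap K.subtype) ⊓ S₀ := ⟨hxJ, hs⟩
    rw [hS₀.inf_eq_bot, Submodule.mem_bot] at this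
    simp [this]
  -- choose a complement N of S' containing J
  obtain ⟨C, hC⟩ := (J ⊔ S').exists_isCompl
  set N : Submodule k A := J ⊔ C with hN
  have hJN : J ≤ N := le_sup_left
  have hcompl : IsCompl S' N := by
    constructor
    · rw [disjoint_iff, eq_bot_iff]
      rintro x ⟨hxS, hxN⟩
      obtain ⟨j, hj, c, hc', hjc⟩ := Submodule.mem_sup.1 hxN
      have hcmem : c ∈ (J ⊔ S') ⊓ C := by
        refine ⟨?_, hc'⟩
        have : c = x - j := by rw [← hjc]; abel
        rw [this]
        exact Submodule.sub_mem _ (Submodule.mem_sup_right hxS) (Submodule.mem_sup_left hj)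
      rw [hC.inf_eq_bot] at hcmem
      have hxj : x = j := by rw [← hjc, hcmem, add_zero]
      have : x ∈ S' ⊓ J := ⟨hxS, hxj ▸ hj⟩
      rw [hS'J] at this
      exact this
    · rw [codisjoint_iff, eq_top_iff, ← hC.sup_eq_top, hN]
      intro x hx
      obtain ⟨y, hy, c, hc', rfl⟩ := Submodule.mem_sup.1 hx
      obtain ⟨j, hj, s, hs, rfl⟩ := Submodule.mem_sup.1 hy
      exact Submodule.add_mem _
        (Submodule.add_mem _ (Submodule.mem_sup_right (Submodule.mem_sup_left hj))
          (Submodule.mem_sup_left hs))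
        (Submodule.mem_sup_right (Submodule.mem_sup_right hc'))
  -- the projection onto S' along N
  set p : A →ₗ[k] S' := Submodule.projectionOnto S' N hcompl with hp
  set g₀ : A →ₗ[k] B := ((f : A →ₗ[k] B).comp S'.subtype).comp p with hg₀
  have hg₀J : ∀ x ∈ J, g₀ x = 0 := by
    intro x hx
    simp [hg₀, hp, Submodule.projectionOnto_apply_of_mem_right hcompl (hJN hx)]
  have hg₀cont : Continuous g₀ := by
    apply continuous_of_continuousAt_zero g₀.toAddMonoidHom
    rw [ContinuousAt, map_zero]
    have hev : ∀ᶠ x in 𝓝 (0 : A), g₀ x = 0 :=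
      Filter.eventually_of_mem (hJopen.mem_nhds J.zero_mem) hg₀J
    exact Filter.Tendsto.congr' (Filter.eventually_of_mem (hJopen.mem_nhds J.zero_mem)
      (fun x hx => (hg₀J x hx).symm)) tendsto_const_nhds
  set g : A →L[k] B := ⟨g₀, hg₀cont⟩ with hg
  refine ⟨g, ?_, ?_⟩
  · -- g has finite rank
    show FiniteDimensional k ↥(LinearMap.range (g : A →ₗ[k] B))
    have hle : LinearMap.range (g : A →ₗ[k] B) ≤ S'.map (f : A →ₗ[k] B) := by
      rintro _ ⟨x, rfl⟩
      exact ⟨(p x : A), (p x).2, rfl⟩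
    exact Submodule.finiteDimensional_of_le hle
  · -- g ∈ f + S_{K,W}
    refine ⟨g - f, ?_, show f + (g - f) = g by rw [add_comm]; exact sub_add_cancel g f⟩
    intro x hx
    obtain ⟨s', hs', hxs'⟩ := hdec x hx
    have hpx : p x = ⟨s', hs'⟩ := by
      have h1 : x = (⟨s', hs'⟩ : S') + (x - s') := by simp
      rw [h1, map_add, hp, Submodule.linearProjOfIsCompl_apply_left,
        Submodule.projectionOnto_apply_of_mem_right hcompl (hJN hxs'), add_zero]
    have : (g - f) x = f (s' - x) := by
      simp only [ContinuousLinearMap.sub_apply]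
      have : g x = f s' := by
        show g₀ x = f s'
        simp [hg₀, hpx]
      rw [this, ← map_sub]
    rw [this]
    have : s' - x ∈ J := by
      have := J.neg_mem hxs'
      simpa using this
    exact this
end

section
/- Every Tate vector space A over a discrete field k is linearly compactly generated: a subset U ⊆ A is open whenever U ∩ K is open in the subspace topology of K for every linearly compact subspace K ⊆ A. -/
open Filter Topology

/-- Every Tate vector space is linearly compactly generated: a subset is open as soon
as its intersection with every linearly compact subspace `K` is open in the subspace
topology of `K`. -/
theorem tate_linearlyCompactlyGenerated
    {k : Type*} [Field k] [TopologicalSpace k] [DiscreteTopology k]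
    {A : Type*} [AddCommGroup A] [Module k A] [UniformSpace A]
    [IsUniformAddGroup A] [ContinuousSMul k A] [T2Space A]
    (hA : IsLinearlyTopologized k A) (hTate : IsTate k A) :
    ∀ U : Set A,
      (∀ K : Submodule k A, LinearlyCompact k K →
        IsOpen (Subtype.val ⁻¹' U : Set ↥K)) →
      IsOpen U := by

  intro U hU
  obtain ⟨hComp, L, hLopen, hLclosed, hLcomplete, hLbdd⟩ := hTate
  rw [isOpen_iff_mem_nhds]
  intro a ha
  set K : Submodule k A := L ⊔ (k ∙ a) with hKdef
  have hLK : L ≤ K := le_sup_left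
  have haK : a ∈ K := Submodule.mem_sup_right (Submodule.mem_span_singleton_self a)
  have hKopen : IsOpen (K : Set A) :=
    AddSubgroup.isOpen_mono (H₁ := L.toAddSubgroup) (H₂ := K.toAddSubgroup) hLK hLopen
  have hKclosed : IsClosed (K : Set A) :=
    K.toAddSubgroup.isClosed_of_isOpen hKopen
  have hKcompact : LinearlyCompact k K := by
    refine ⟨hKclosed, hKclosed.isComplete, ?_⟩
    intro U' hU'open
    set M := U'.comap K.subtype with hM
    let i : L →ₗ[k] K ⧸ M := M.mkQ ∘ₗ Submodule.inclusion hLK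
    have hker : U'.comap L.subtype ≤ LinearMap.ker i := by
      intro x hx
      simp only [i, LinearMap.mem_ker, LinearMap.comp_apply, Submodule.mkQ_apply,
        Submodule.Quotient.mk_eq_zero, hM, Submodule.mem_comap]
      exact hx
    let f := (U'.comap L.subtype).liftQ i hker
    haveI hfd1 : FiniteDimensional k (L ⧸ U'.comap L.subtype) := hLbdd U' hU'open
    haveI h1 : FiniteDimensional k (LinearMap.range f) := LinearMap.finiteDimensional_range f
    haveI h2 : FiniteDimensional k (k ∙ (M.mkQ ⟨a, haK⟩)) := inferInstance
    have htop : (⊤ : Submodule k (K ⧸ M)) ≤ LinearMap.range f ⊔ (k ∙ M.mkQ ⟨a, haK⟩) := by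
      intro x _
      obtain ⟨y, rfl⟩ := M.mkQ_surjective x
      have hy : (y : A) ∈ L ⊔ (k ∙ a) := y.2
      obtain ⟨l, hl, z, hz, hlz⟩ := Submodule.mem_sup.mp hy
      obtain ⟨c, rfl⟩ := Submodule.mem_span_singleton.mp hz
      have hy' : y = Submodule.inclusion hLK ⟨l, hl⟩ + c • ⟨a, haK⟩ := by
        apply Subtype.ext
        simpa using hlz.symm
      rw [hy', map_add, map_smul]
      refine Submodule.add_mem_sup ?_ ?_
      · exact ⟨(U'.comap L.subtype).mkQ ⟨l, hl⟩, rfl⟩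
      · exact Submodule.smul_mem _ c (Submodule.mem_span_singleton_self _)
    haveI : FiniteDimensional k (LinearMap.range f ⊔ (k ∙ M.mkQ ⟨a, haK⟩) : Submodule k (K ⧸ M)) :=
      Submodule.finiteDimensional_sup _ _
    haveI hT : FiniteDimensional k (⊤ : Submodule k (K ⧸ M)) :=
      FiniteDimensional.of_injective (Submodule.inclusion htop)
        (Submodule.inclusion_injective htop)
    exact Submodule.topEquiv.finiteDimensional
  have hUK : IsOpen (Subtype.val ⁻¹' U : Set ↥K) := hU K hKcompact
  have hUo : IsOpen (Subtype.val '' (Subtype.val ⁻¹' U : Set ↥K)) :=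
    hKopen.isOpenMap_subtype_val _ hUK
  exact mem_nhds_iff.mpr ⟨_, Set.image_preimage_subset _ _, hUo, ⟨⟨a, haK⟩, ha, rfl⟩⟩
end

section
/- Let A and B be linearly topologized vector spaces over a discrete field k. If A is linearly compactly generated and B is complete, then Hom(A,B) with the compact-open topology is complete. In particular, the topological dual A* of a linearly compactly generated space A is complete. -/
open Filter Topology Uniformity

/-- A linearly topologized vector space is linearly compactly generated if a subset is
open whenever its intersection with every linearly compact subspace `K` is open in the
subspace topology of `K`. -/
def LinearlyCompactlyGenerated (k V : Type*) [Field k] [AddCommGroup V] [Module k V]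
    [UniformSpace V] : Prop :=
  ∀ U : Set V,
    (∀ K : Submodule k V, LinearlyCompact k K →
      IsOpen (Subtype.val ⁻¹' U : Set ↥K)) →
    IsOpen U

section Aux

variable {k : Type*} [Field k]
variable {A : Type*} [AddCommGroup A] [Module k A] [UniformSpace A]
    [IsUniformAddGroup A] [T2Space A]

lemma exists_open_inf_span_singleton_eq_bot
    (hA : IsLinearlyTopologized k A) (a : A) :
    ∃ U : Submodule k A, IsOpen (U : Set A) ∧ U ⊓ Submodule.span k {a} = ⊥ := by
  by_cases ha : a = 0
  · obtain ⟨U, hU⟩ := hA.ex_mem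
    exact ⟨U, hU, by simp [ha, Submodule.span_zero_singleton]⟩
  · have h1 : {a}ᶜ ∈ 𝓝 (0 : A) := by
      refine (isOpen_compl_singleton).mem_nhds ?_
      simp [Ne.symm ha]
    obtain ⟨U, hUo, hUsub⟩ := hA.mem_iff.1 h1
    refine ⟨U, hUo, ?_⟩
    rw [eq_bot_iff]
    rintro x ⟨hxU, hxS⟩
    obtain ⟨c, rfl⟩ := Submodule.mem_span_singleton.1 hxS
    rcases eq_or_ne c 0 with rfl | hc
    · simp
    · exfalso
      have haU : a ∈ U := by
        have := U.smul_mem c⁻¹ hxU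
        rwa [inv_smul_smul₀ hc] at this
      exact hUsub haU rfl

lemma spanSingleton_linearlyCompact
    (hA : IsLinearlyTopologized k A) (a : A) :
    LinearlyCompact k (Submodule.span k {a}) := by
  obtain ⟨U, hUo, hUb⟩ := exists_open_inf_span_singleton_eq_bot hA a
  set S := Submodule.span k {a} with hS
  -- completeness: S is discrete
  have hcomplete : IsComplete (S : Set A) := by
    intro l hl hlS
    have hUnhds : (U : Set A) ∈ 𝓝 (0 : A) := hUo.mem_nhds (U.zero_mem)
    have hE : {p : A × A | p.2 - p.1 ∈ U} ∈ 𝓤 A := by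
      rw [uniformity_eq_comap_nhds_zero A]
      exact Filter.preimage_mem_comap hUnhds
    have hE' : {p : A × A | p.2 - p.1 ∈ U} ∈ l ×ˢ l := hl.2 hE
    obtain ⟨T1, hT1, T2, hT2, hT12⟩ := Filter.mem_prod_iff.1 hE'
    have hSl : (S : Set A) ∈ l := hlS (Filter.mem_principal_self _)
    have hT : T1 ∩ T2 ∩ (S : Set A) ∈ l := inter_mem (inter_mem hT1 hT2) hSl
    haveI := hl.1
    obtain ⟨x, hx⟩ := Filter.nonempty_of_mem hT
    refine ⟨x, hx.2, ?_⟩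
    have hsub : T1 ∩ T2 ∩ (S : Set A) ⊆ {x} := by
      rintro y hy
      have h1 : y - x ∈ U := hT12 (Set.mk_mem_prod hx.1.1 hy.1.2)
      have h2 : y - x ∈ S := S.sub_mem hy.2 hx.2
      have : y - x ∈ U ⊓ S := ⟨h1, h2⟩
      rw [hUb] at this
      have : y - x = 0 := this
      simp [sub_eq_zero] at this
      simp [this]
    intro N hN
    exact Filter.mem_of_superset hT
      (hsub.trans (by simpa using mem_of_mem_nhds hN : ({x} : Set A) ⊆ N))
  refine ⟨hcomplete.isClosed, hcomplete, ?_⟩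
  intro V hV
  haveI : FiniteDimensional k S := FiniteDimensional.span_of_finite k (Set.finite_singleton a)
  infer_instance

end Aux


/-- If `A` is linearly compactly generated and `B` is complete, then `Hom(A,B)` with
the compact-open topology is complete.  (In particular, taking `B = k`, the topological
dual of a linearly compactly generated space is complete.) -/
theorem hom_complete_of_compactlyGenerated_complete
    {k : Type*} [Field k] [TopologicalSpace k] [DiscreteTopology k]
    {A : Type*} [AddCommGroup A] [Module k A] [UniformSpace A]
    [IsUniformAddGroup A] [ContinuousSMul k A] [T2Space A]
    {B : Type*} [AddCommGroup B] [Module k B] [UniformSpace B]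
    [IsUniformAddGroup B] [ContinuousSMul k B] [T2Space B]
    (hA : IsLinearlyTopologized k A) (hB : IsLinearlyTopologized k B)
    (hAgen : LinearlyCompactlyGenerated k A)
    (hBcomplete : CompleteSpace B)
    [UniformSpace (A →L[k] B)] [IsUniformAddGroup (A →L[k] B)]
    (hco : IsCompactOpenTopology k (A := A) (B := B)) :
    CompleteSpace (A →L[k] B) := by
  constructor
  intro F hF
  haveI hFne : F.NeBot := hF.1
  -- evaluation maps are uniformly continuous
  have evalUC : ∀ a : A, UniformContinuous (fun f : A →L[k] B => f a) := by
    intro a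
    let evalAM : (A →L[k] B) →+ B :=
      { toFun := fun f => f a
        map_zero' := rfl
        map_add' := fun f g => rfl }
    have hcont : ContinuousAt (fun f : A →L[k] B => f a) 0 := by
      show Tendsto (fun f : A →L[k] B => f a) (𝓝 0) (𝓝 ((0 : A →L[k] B) a))
      rw [ContinuousLinearMap.zero_apply, hB.tendsto_right_iff]
      intro W hW
      refine Filter.mem_of_superset
        (hco.mem_of_mem (i := (Submodule.span k {a}, W))
          ⟨spanSingleton_linearlyCompact hA a, hW⟩) ?_
      intro f hf
      exact hf a (Submodule.mem_span_singleton_self a)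
    exact uniformContinuous_addMonoidHom_of_continuous
      (continuous_of_continuousAt_zero evalAM hcont)
  -- pointwise limits exist
  have key : ∀ a : A, ∃ b : B, Tendsto (fun f : A →L[k] B => f a) F (𝓝 b) := by
    intro a
    obtain ⟨b, hb⟩ := CompleteSpace.complete (hF.map (evalUC a))
    exact ⟨b, hb⟩
  choose g hg using key
  -- g is linear
  have hadd : ∀ x y : A, g (x + y) = g x + g y := by
    intro x y
    refine tendsto_nhds_unique ?_ ((hg x).add (hg y))
    have : (fun f : A →L[k] B => f (x + y)) = fun f => f x + f y := by
      ext f; exact f.map_add x y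
    rw [← this]; exact hg (x + y)
  have hsmul : ∀ (c : k) (x : A), g (c • x) = c • g x := by
    intro c x
    refine tendsto_nhds_unique ?_ ((hg x).const_smul c)
    have : (fun f : A →L[k] B => f (c • x)) = fun f => c • f x := by
      ext f; exact f.map_smul c x
    rw [← this]; exact hg (c • x)
  set gL : A →ₗ[k] B :=
    { toFun := g, map_add' := hadd, map_smul' := hsmul } with hgL
  -- key approximation: for each linearly compact K and open W, there is f0 ∈ F-set with
  -- g - f0 ∈ S_{K,W} and the F-set within f0 + S_{K,W}
  have approx : ∀ (K : Submodule k A) (W : Submodule k B),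
      LinearlyCompact k K → IsOpen (W : Set B) →
      ∃ T ∈ F, ∃ f0 : A →L[k] B, f0 ∈ T ∧
        (∀ f ∈ T, ∀ x ∈ K, f x - f0 x ∈ W) ∧ (∀ x ∈ K, g x - f0 x ∈ W) := by
    intro K W hK hW
    have hSnhds : {f : A →L[k] B | ∀ x ∈ K, f x ∈ W} ∈ 𝓝 (0 : A →L[k] B) :=
      hco.mem_of_mem (i := (K, W)) ⟨hK, hW⟩
    have hE : {p : (A →L[k] B) × (A →L[k] B) | ∀ x ∈ K, p.2 x - p.1 x ∈ W}
        ∈ 𝓤 (A →L[k] B) := by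
      rw [uniformity_eq_comap_nhds_zero (A →L[k] B)]
      refine Filter.mem_comap.2 ⟨_, hSnhds, ?_⟩
      rintro ⟨f1, f2⟩ hp x hx
      simpa using hp x hx
    obtain ⟨T1, hT1, T2, hT2, hT12⟩ := Filter.mem_prod_iff.1 (hF.2 hE)
    obtain ⟨f0, hf0⟩ := Filter.nonempty_of_mem (inter_mem hT1 hT2)
    refine ⟨T1 ∩ T2, inter_mem hT1 hT2, f0, hf0, ?_, ?_⟩
    · intro f hf x hx
      exact hT12 (Set.mk_mem_prod hf0.1 hf.2) x hx
    · intro x hx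
      -- g x ∈ {b | b - f0 x ∈ W}, a closed set
      have hWclosed : IsClosed (W : Set B) := W.toAddSubgroup.isClosed_of_isOpen hW
      have hC : IsClosed {b : B | b - f0 x ∈ W} :=
        hWclosed.preimage (continuous_id.sub continuous_const)
      refine hC.mem_of_tendsto (hg x) ?_
      refine Filter.mem_of_superset hT2 ?_
      intro f hf
      exact hT12 (Set.mk_mem_prod hf0.1 hf) x hx -- careful: need f ∈ T2
  -- preimages of open subspaces under g are open
  have hpre : ∀ W : Submodule k B, IsOpen ((W : Set B)) → IsOpen (g ⁻¹' (W : Set B)) := by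
    intro W hW
    apply hAgen
    intro K hK
    obtain ⟨T, hT, f0, hf0T, hTW, hgW⟩ := approx K W hK hW
    have heq : (Subtype.val ⁻¹' (g ⁻¹' (W : Set B)) : Set ↥K)
        = Subtype.val ⁻¹' (⇑f0 ⁻¹' (W : Set B)) := by
      ext ⟨x, hx⟩
      simp only [Set.mem_preimage]
      have hd : g x - f0 x ∈ W := hgW x hx
      constructor
      · intro h
        have : f0 x = g x - (g x - f0 x) := by abel
        rw [this]; exact W.sub_mem h hd
      · intro h
        have : g x = f0 x + (g x - f0 x) := by abel
        rw [this]; exact W.add_mem h hd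
    rw [heq]
    exact (hW.preimage f0.continuous).preimage continuous_subtype_val
  -- g is continuous
  have hg0 : g 0 = 0 := gL.map_zero
  have hgcont : Continuous g := by
    refine continuous_of_continuousAt_zero gL.toAddMonoidHom ?_
    show Tendsto g (𝓝 0) (𝓝 (g 0))
    rw [hg0, hB.tendsto_right_iff]
    intro W hW
    have : g ⁻¹' (W : Set B) ∈ 𝓝 (0 : A) :=
      (hpre W hW).mem_nhds (by simp [hg0, W.zero_mem])
    exact this
  refine ⟨⟨gL, hgcont⟩, ?_⟩
  set G : A →L[k] B := ⟨gL, hgcont⟩ with hG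
  have htend : Tendsto (fun f : A →L[k] B => f - G) F (𝓝 0) := by
    rw [hco.tendsto_right_iff]
    rintro ⟨K, W⟩ ⟨hK, hW⟩
    obtain ⟨T, hT, f0, hf0T, hTW, hgW⟩ := approx K W hK hW
    refine Filter.mem_of_superset hT ?_
    intro f hf x hx
    have h1 : f x - f0 x ∈ W := hTW f hf x hx
    have h2 : g x - f0 x ∈ W := hgW x hx
    have hGx : G x = g x := rfl
    show (f - G) x ∈ W
    have : (f - G) x = (f x - f0 x) - (g x - f0 x) := by
      rw [ContinuousLinearMap.sub_apply, hGx]; abel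
    rw [this]
    exact W.sub_mem h1 h2
  exact tendsto_sub_nhds_zero_iff.1 htend
end

section
/- Let A, B, C be linearly topologized vector spaces over a discrete field k, with B a Tate vector space. For a bilinear map f : A × B → C, the following are equivalent: (1) f is continuous with respect to the product topology on A × B; (2) for every a ∈ A the linear map f(a, ·) : B → C is continuous, and the induced linear map A → Hom(B,C), a ↦ f(a, ·), is continuous when Hom(B,C) carries the compact-open topology. -/
open Filter Topology

theorem aux_span_singleton_compact {k B : Type*} [Field k] [AddCommGroup B] [Module k B]
    [UniformSpace B] [IsUniformAddGroup B] [T2Space B]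
    (hB : IsLinearlyTopologized k B) (b : B) :
    LinearlyCompact k (Submodule.span k {b}) := by
  -- a separating open submodule
  obtain ⟨V, hVopen, hVsep⟩ :
      ∃ V : Submodule k B, IsOpen (V : Set B) ∧
        ∀ x ∈ Submodule.span k {b}, x ∈ V → x = 0 := by
    by_cases hb : b = 0
    · obtain ⟨V, hV⟩ := hB.ex_mem
      exact ⟨V, hV, fun x hx _ => by
        simpa [hb, Submodule.mem_bot] using (by simpa [hb] using hx : x ∈ (⊥ : Submodule k B))⟩
    · have h1 : ({b}ᶜ : Set B) ∈ nhds (0 : B) :=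
        (isOpen_compl_singleton).mem_nhds (by simp [Ne.symm hb])
      obtain ⟨V, hVopen, hVsub⟩ := hB.mem_iff.1 h1
      refine ⟨V, hVopen, fun x hx hxV => ?_⟩
      obtain ⟨c, rfl⟩ := Submodule.mem_span_singleton.1 hx
      by_contra hne
      have hc : c ≠ 0 := fun h => hne (by simp [h])
      have : b ∈ V := by
        have := V.smul_mem c⁻¹ hxV
        rwa [inv_smul_smul₀ hc] at this
      exact hVsub this rfl
  have hVnhds : (V : Set B) ∈ nhds (0 : B) := hVopen.mem_nhds V.zero_mem
  have hcomplete : IsComplete ((Submodule.span k {b} : Submodule k B) : Set B) := by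
    intro F hF hle
    have hent : {p : B × B | p.2 - p.1 ∈ V} ∈ uniformity B := by
      rw [uniformity_eq_comap_nhds_zero]
      exact preimage_mem_comap hVnhds
    obtain ⟨t, htF, hts⟩ := (cauchy_iff.1 hF).2 _ hent
    have hspanF : ((Submodule.span k {b} : Submodule k B) : Set B) ∈ F := hle (by simp)
    have ht' : t ∩ (Submodule.span k {b} : Submodule k B) ∈ F := inter_mem htF hspanF
    have : F.NeBot := hF.1
    obtain ⟨x, hxt, hxs⟩ := Filter.nonempty_of_mem ht'
    refine ⟨x, hxs, ?_⟩
    have hsingle : ({x} : Set B) ∈ F := by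
      refine mem_of_superset ht' fun y ⟨hyt, hys⟩ => ?_
      have h1 : y - x ∈ V := hts (Set.mk_mem_prod hxt hyt)
      have h2 : y - x ∈ Submodule.span k {b} := Submodule.sub_mem _ hys hxs
      exact sub_eq_zero.1 (hVsep _ h2 h1)
    intro s hs
    exact mem_of_superset hsingle (Set.singleton_subset_iff.2 (mem_of_mem_nhds hs))
  refine ⟨hcomplete.isClosed, hcomplete, fun U hU => ?_⟩
  have : FiniteDimensional k (Submodule.span k {b}) :=
    FiniteDimensional.span_of_finite k (Set.finite_singleton b)
  infer_instance

theorem aux_isOpen_finset_inf {k A ι : Type*} [Field k] [AddCommGroup A] [Module k A]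
    [TopologicalSpace A] (s : Finset ι) (U : ι → Submodule k A)
    (hU : ∀ i ∈ s, IsOpen ((U i : Submodule k A) : Set A)) :
    IsOpen ((s.inf U : Submodule k A) : Set A) := by
  classical
  induction s using Finset.induction_on with
  | empty => simp
  | @insert a t hx ih =>
    rw [Finset.inf_insert]
    have : ((U a ⊓ t.inf U : Submodule k A) : Set A) = (U a : Set A) ∩ ((t.inf U : Submodule k A) : Set A) := rfl
    rw [this]
    exact (hU a (Finset.mem_insert_self a t)).inter
      (ih fun i hi => hU i (Finset.mem_insert_of_mem hi))

/-- For a bilinear map `f : A × B → C` with `B` a Tate vector space, continuity of `f`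
for the product topology is equivalent to: each partial map `f(a,·) : B → C` is
continuous, and the induced map `A → Hom(B,C)`, `a ↦ f(a,·)`, is continuous for the
compact-open topology on `Hom(B,C)`. -/
theorem bilinear_continuous_iff_curried_continuous
    {k : Type*} [Field k] [TopologicalSpace k] [DiscreteTopology k]
    {A : Type*} [AddCommGroup A] [Module k A] [TopologicalSpace A]
    [IsTopologicalAddGroup A] [ContinuousSMul k A] [T2Space A]
    {B : Type*} [AddCommGroup B] [Module k B] [UniformSpace B]
    [IsUniformAddGroup B] [ContinuousSMul k B] [T2Space B]
    {C : Type*} [AddCommGroup C] [Module k C] [TopologicalSpace C]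
    [IsTopologicalAddGroup C] [ContinuousSMul k C] [T2Space C]
    (hA : IsLinearlyTopologized k A) (hB : IsLinearlyTopologized k B)
    (hC : IsLinearlyTopologized k C)
    (hBTate : IsTate k B)
    [TopologicalSpace (B →L[k] C)] [IsTopologicalAddGroup (B →L[k] C)]
    (hco : IsCompactOpenTopology k (A := B) (B := C))
    (f : A →ₗ[k] B →ₗ[k] C) :
    Continuous (fun p : A × B => f p.1 p.2) ↔
      ∃ g : A → (B →L[k] C), (∀ a : A, ⇑(g a) = ⇑(f a)) ∧ Continuous g := by
  constructor
  · intro hcont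
    have gcont : ∀ a : A, Continuous fun b => f a b :=
      fun a => hcont.comp (Continuous.prodMk_right a)
    set g : A → (B →L[k] C) := fun a => ⟨f a, gcont a⟩ with hgdef
    refine ⟨g, fun a => rfl, ?_⟩
    let G : A →+ (B →L[k] C) :=
      { toFun := g
        map_zero' := by
          ext b
          show f 0 b = (0 : B →L[k] C) b
          simp
        map_add' := fun a a' => by
          ext b
          simp only [ContinuousLinearMap.add_apply]
          show f (a + a') b = f a b + f a' b
          simp }
    have hG0 : ContinuousAt G 0 := by
      have h0 : G 0 = 0 := map_zero G
      rw [ContinuousAt, h0, hA.tendsto_iff hco]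
      rintro ⟨K, W⟩ ⟨hK, hW⟩
      have hW0 : (W : Set C) ∈ nhds (0 : C) := hW.mem_nhds W.zero_mem
      -- joint continuity at (0,0)
      have hpre : (fun p : A × B => f p.1 p.2) ⁻¹' W ∈ nhds ((0 : A), (0 : B)) := by
        have h := hcont.continuousAt (x := ((0 : A), (0 : B)))
        rw [ContinuousAt] at h
        have h00 : f ((0 : A), (0 : B)).1 ((0 : A), (0 : B)).2 = 0 := by simp
        rw [h00] at h
        exact h hW0
      rw [nhds_prod_eq] at hpre
      obtain ⟨⟨U₀, V₀⟩, ⟨hU₀, hV₀⟩, hsub⟩ := (hA.prod hB).mem_iff.1 hpre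
      -- finite dimensionality of K/(K ∩ V₀)
      haveI := hK.2.2 V₀ hV₀
      obtain ⟨n, sq, hsq⟩ :=
        Module.Finite.exists_fin (R := k) (M := ↥K ⧸ (V₀.comap K.subtype))
      have hsurj := Submodule.mkQ_surjective (V₀.comap K.subtype)
      choose x hx using fun i => hsurj (sq i)
      -- open submodules controlling each x i
      have hmem : ∀ i, (fun a : A => f a ((x i : ↥K) : B)) ⁻¹' W ∈ nhds (0 : A) := by
        intro i
        have hc : Continuous fun a : A => f a ((x i : ↥K) : B) :=
          hcont.comp (continuous_id.prodMk continuous_const)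
        have h := hc.continuousAt (x := (0 : A))
        rw [ContinuousAt] at h
        have h0 : f (0 : A) ((x i : ↥K) : B) = 0 := by simp
        rw [h0] at h
        exact h hW0
      choose Ui hUiopen hUisub using fun i => hA.mem_iff.1 (hmem i)
      refine ⟨U₀ ⊓ Finset.univ.inf Ui, ?_, ?_⟩
      · show IsOpen ((U₀ : Set A) ∩ ((Finset.univ.inf Ui : Submodule k A) : Set A))
        exact hU₀.inter (aux_isOpen_finset_inf _ _ fun i _ => hUiopen i)
      · intro a ha y hy
        obtain ⟨haU₀, haUi⟩ := Submodule.mem_inf.1 ha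
        -- decompose y
        have hmkq : (V₀.comap K.subtype).mkQ ⟨y, hy⟩ ∈
            Submodule.map (V₀.comap K.subtype).mkQ (Submodule.span k (Set.range x)) := by
          rw [Submodule.map_span]
          have hcomp : ⇑(V₀.comap K.subtype).mkQ ∘ x = sq := funext hx
          rw [← Set.range_comp, hcomp, hsq]
          trivial
        obtain ⟨m, hm, hmk⟩ := Submodule.mem_map.1 hmkq
        have hker : (⟨y, hy⟩ : ↥K) - m ∈ V₀.comap K.subtype := by
          have : (V₀.comap K.subtype).mkQ ((⟨y, hy⟩ : ↥K) - m) = 0 := by rw [map_sub, hmk, sub_self]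
          rwa [Submodule.mkQ_apply, Submodule.Quotient.mk_eq_zero] at this
        have h1 : f a (((⟨y, hy⟩ : ↥K) - m : ↥K) : B) ∈ W := by
          have hv : (((⟨y, hy⟩ : ↥K) - m : ↥K) : B) ∈ (V₀ : Set B) := hker
          exact hsub (Set.mk_mem_prod haU₀ hv)
        have h2 : f a ((m : ↥K) : B) ∈ W := by
          have hspan : Submodule.span k (Set.range fun i => ((x i : ↥K) : B)) ≤
              W.comap (f a) := by
            rw [Submodule.span_le]
            rintro _ ⟨i, rfl⟩
            exact hUisub i (Submodule.mem_finsetInf.1 haUi i (Finset.mem_univ i))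
          have hmB : ((m : ↥K) : B) ∈
              Submodule.span k (Set.range fun i => ((x i : ↥K) : B)) := by
            have : ((m : ↥K) : B) ∈ Submodule.map K.subtype (Submodule.span k (Set.range x)) :=
              Submodule.mem_map_of_mem hm
            rw [Submodule.map_span, ← Set.range_comp] at this
            exact this
          exact hspan hmB
        have hyeq : y = ((m : ↥K) : B) + (((⟨y, hy⟩ : ↥K) - m : ↥K) : B) := by
          push_cast
          abel
        rw [show (G a : B →L[k] C) y = f a y from rfl, hyeq, map_add]
        exact W.add_mem h2 h1
    exact continuous_of_continuousAt_zero G hG0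
  · rintro ⟨g, hg, hgc⟩
    obtain ⟨_, L, hLopen, hLcomp⟩ := hBTate
    have hg0 : g 0 = 0 := by
      ext b
      rw [hg]
      simp
    have hgt : Tendsto g (nhds 0) (nhds (0 : B →L[k] C)) := by
      have h := hgc.continuousAt (x := (0 : A))
      rwa [ContinuousAt, hg0] at h
    let F : A →+ B →+ C :=
      { toFun := fun a => (f a).toAddMonoidHom
        map_zero' := by ext b; simp
        map_add' := fun a a' => by ext b; simp }
    have key : Continuous fun p : A × B => F p.1 p.2 := by
      apply continuous_of_continuousAt_zero₂ F
      · -- joint continuity at (0,0)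
        show ContinuousAt (fun p : A × B => f p.1 p.2) ((0 : A), (0 : B))
        have h00 : f ((0 : A), (0 : B)).1 ((0 : A), (0 : B)).2 = 0 := by simp
        rw [ContinuousAt, h00, hC.tendsto_right_iff]
        intro W hW
        have hS : {h : B →L[k] C | ∀ x ∈ L, h x ∈ W} ∈ nhds (0 : B →L[k] C) :=
          hco.mem_of_mem (i := (L, W)) ⟨hLcomp, hW⟩
        have hpre : g ⁻¹' {h : B →L[k] C | ∀ x ∈ L, h x ∈ W} ∈ nhds (0 : A) := hgt hS
        rw [nhds_prod_eq]
        filter_upwards [prod_mem_prod hpre (hLopen.mem_nhds L.zero_mem)] with p hp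
        have h := hp.1 p.2 hp.2
        rw [congrFun (hg p.1) p.2] at h
        exact h
      · intro a
        show ContinuousAt (fun b => f a b) 0
        have : Continuous fun b => f a b := hg a ▸ (g a).continuous
        exact this.continuousAt
      · intro b
        show ContinuousAt (fun a => f a b) 0
        have hsb := aux_span_singleton_compact hB b
        have h0 : f (0 : A) b = 0 := by simp
        rw [ContinuousAt, h0, hC.tendsto_right_iff]
        intro W hW
        have hS : {h : B →L[k] C | ∀ x ∈ Submodule.span k {b}, h x ∈ W} ∈
            nhds (0 : B →L[k] C) :=
          hco.mem_of_mem (i := (Submodule.span k {b}, W)) ⟨hsb, hW⟩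
        filter_upwards [hgt hS] with a ha
        have h := ha b (Submodule.mem_span_singleton_self b)
        rwa [congrFun (hg a) b] at h
    exact key
end

section
/- For each n ∈ ℕ let W_n be a Tate vector space over a discrete field k, and for i ≤ j let g_{ij} : W_j → W_i be continuous linear maps with g_{ii} = id and g_{ij} ∘ g_{jk} = g_{ik} for i ≤ j ≤ k, such that each g_{ij} is proper, i.e., the preimage under g_{ij} of every linearly compact subspace of W_i is a linearly compact subspace of W_j. Then the inverse limit lim W_n = {x ∈ ∏_n W_n : g_{ij}(x_j) = x_i for all i ≤ j}, equipped with the subspace topology induced from the product topology on ∏_n W_n, is a Tate vector space. -/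
open Filter Topology

/-- The inverse limit `lim Wₙ = {x ∈ ∏ₙ Wₙ : g_{ij}(x_j) = x_i for i ≤ j}` of an inverse
system of topological vector spaces, as a submodule of the product. -/
def invLimit {k : Type*} [Field k] {W : ℕ → Type*}
    [∀ n, AddCommGroup (W n)] [∀ n, Module k (W n)] [∀ n, TopologicalSpace (W n)]
    (g : ∀ i j : ℕ, i ≤ j → (W j →L[k] W i)) : Submodule k (∀ n, W n) where
  carrier := {x | ∀ (i j : ℕ) (h : i ≤ j), g i j h (x j) = x i}
  add_mem' := fun hx hy i j h => by simp [hx i j h, hy i j h]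
  zero_mem' := fun i j h => by simp
  smul_mem' := fun c x hx i j h => by simp [hx i j h]

/-- Auxiliary: if a linear map on `L` with finite-dimensional codomain has kernel contained
in `U ∩ L`, then `L / (U ∩ L)` is finite dimensional. -/
lemma finiteDimensional_quotient_of_ker_le {k V T : Type*} [Field k] [AddCommGroup V]
    [Module k V] [AddCommGroup T] [Module k T] [FiniteDimensional k T]
    (L U : Submodule k V) (φ : ↥L →ₗ[k] T)
    (hker : LinearMap.ker φ ≤ U.comap L.subtype) :
    FiniteDimensional k (↥L ⧸ U.comap L.subtype) := by
  haveI : FiniteDimensional k ↥(LinearMap.range φ) := inferInstance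
  haveI : FiniteDimensional k (↥L ⧸ LinearMap.ker φ) :=
    FiniteDimensional.of_injective ((LinearMap.ker φ).liftQ φ le_rfl)
      (by rw [← LinearMap.ker_eq_bot, Submodule.ker_liftQ_eq_bot _ _ _ le_rfl])
  have hsurj : Function.Surjective
      (Submodule.mapQ (LinearMap.ker φ) (U.comap L.subtype) LinearMap.id hker) := by
    intro y
    obtain ⟨x, rfl⟩ := Submodule.Quotient.mk_surjective _ y
    exact ⟨Submodule.Quotient.mk x, by simp [Submodule.mapQ_apply]⟩
  exact Module.Finite.of_surjective _ hsurj

set_option maxHeartbeats 1000000 in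
set_option synthInstance.maxHeartbeats 1000000 in
/-- The inverse limit of a countably indexed inverse system of Tate vector spaces with
proper transition maps, with the subspace topology induced from the product topology,
is a Tate vector space. -/
theorem invLimit_tate_of_proper
    {k : Type*} [Field k] [TopologicalSpace k] [DiscreteTopology k]
    {W : ℕ → Type*} [∀ n, AddCommGroup (W n)] [∀ n, Module k (W n)]
    [∀ n, UniformSpace (W n)] [∀ n, IsUniformAddGroup (W n)]
    [∀ n, ContinuousSMul k (W n)] [∀ n, T2Space (W n)]
    (hlin : ∀ n, IsLinearlyTopologized k (W n))
    (hTate : ∀ n, IsTate k (W n))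
    (g : ∀ i j : ℕ, i ≤ j → (W j →L[k] W i))
    (hg_id : ∀ i, g i i le_rfl = ContinuousLinearMap.id k (W i))
    (hg_comp : ∀ (i j l : ℕ) (hij : i ≤ j) (hjl : j ≤ l) (x : W l),
      g i j hij (g j l hjl x) = g i l (hij.trans hjl) x)
    (hproper : ∀ (i j : ℕ) (h : i ≤ j) (K : Submodule k (W i)),
      LinearlyCompact k K → LinearlyCompact k (K.comap ((g i j h) : W j →ₗ[k] W i))) :
    IsTate k ↥(invLimit g) := by
  haveI : ∀ n, CompleteSpace (W n) := fun n => (hTate n).1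
  have hmemlim : ∀ x : ↥(invLimit g), ∀ (i j : ℕ) (h : i ≤ j),
      g i j h ((x : ∀ n, W n) j) = (x : ∀ n, W n) i := fun x => x.2
  have hclosed : IsClosed ((invLimit g : Submodule k (∀ n, W n)) : Set (∀ n, W n)) := by
    have heq : ((invLimit g : Submodule k (∀ n, W n)) : Set (∀ n, W n)) =
        ⋂ (i : ℕ) (j : ℕ) (h : i ≤ j), {x : ∀ n, W n | g i j h (x j) = x i} := by
      ext x
      simp only [Set.mem_iInter, Set.mem_setOf_eq, SetLike.mem_coe]
      exact Iff.rfl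
    rw [heq]
    exact isClosed_iInter fun i => isClosed_iInter fun j => isClosed_iInter fun h =>
      isClosed_eq ((g i j h).continuous.comp (continuous_apply j)) (continuous_apply i)
  haveI hcs : CompleteSpace ↥(invLimit g) := hclosed.completeSpace_coe
  obtain ⟨-, L₀, hL₀open, hL₀c⟩ := hTate 0
  set π₀ : ↥(invLimit g) →ₗ[k] W 0 := (LinearMap.proj 0).comp (invLimit g).subtype with hπ₀
  have hπ₀cont : Continuous π₀ := (continuous_apply 0).comp continuous_subtype_val
  set L : Submodule k ↥(invLimit g) := L₀.comap π₀ with hLdef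
  have hLset : (L : Set ↥(invLimit g)) = π₀ ⁻¹' (L₀ : Set (W 0)) := rfl
  have hLopen : IsOpen (L : Set ↥(invLimit g)) := by
    rw [hLset]; exact hL₀open.preimage hπ₀cont
  have hLclosed : IsClosed (L : Set ↥(invLimit g)) := by
    rw [hLset]; exact hL₀c.1.preimage hπ₀cont
  refine ⟨hcs, L, hLopen, hLclosed, hLclosed.isComplete, ?_⟩
  intro U hUopen
  -- find a basic neighborhood of 0 inside U
  have hU0 : (U : Set ↥(invLimit g)) ∈ 𝓝 (0 : ↥(invLimit g)) := hUopen.mem_nhds U.zero_mem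
  rw [nhds_subtype_eq_comap, Filter.mem_comap] at hU0
  obtain ⟨V, hV, hVU⟩ := hU0
  have hV0 : V ∈ 𝓝 (0 : ∀ n, W n) := hV
  rw [nhds_pi, Filter.mem_pi] at hV0
  obtain ⟨I, hIfin, t, ht, htV⟩ := hV0
  choose Ui hUiopen hUit using fun i => ((hlin i).mem_iff).mp (ht i)
  obtain ⟨N, hN⟩ := hIfin.bddAbove
  have hNmem : ∀ i ∈ I, i ≤ N := fun i hi => hN hi
  -- the open submodule of W N
  set p : ℕ → Submodule k (W N) := fun i =>
    if h : i ≤ N then Submodule.comap ((g i N h) : W N →ₗ[k] W i) (Ui i) else ⊤ with hp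
  have hpopen : ∀ i, IsOpen ((p i : Set (W N))) := by
    intro i
    by_cases h : i ≤ N
    · rw [hp]; simp only [dif_pos h]
      exact (hUiopen i).preimage (g i N h).continuous
    · rw [hp]; simp only [dif_neg h]
      simpa using isOpen_univ
  set Q : Submodule k (W N) := ⨅ (i) (_ : i ∈ I), p i with hQ
  have hQopen : IsOpen (Q : Set (W N)) := by
    have heq : (Q : Set (W N)) = ⋂ (i) (_ : i ∈ I), (p i : Set (W N)) := by
      ext x
      simp [hQ, Submodule.mem_iInf]
    rw [heq]
    exact hIfin.isOpen_biInter fun i _ => hpopen i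
  have hkey : ∀ x : ↥(invLimit g), (x : ∀ n, W n) N ∈ Q → x ∈ U := by
    intro x hx
    apply hVU
    apply htV
    intro i hi
    have hle : i ≤ N := hNmem i hi
    have h1 : g i N hle ((x : ∀ n, W n) N) = (x : ∀ n, W n) i := hmemlim x i N hle
    have h2 : (x : ∀ n, W n) N ∈ p i :=
      (Submodule.mem_iInf _).mp ((Submodule.mem_iInf _).mp hx i) hi
    rw [hp] at h2
    simp only [dif_pos hle, Submodule.mem_comap] at h2
    exact hUit i (by rw [← h1]; exact h2)
  have h0N : (0 : ℕ) ≤ N := Nat.zero_le N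
  set K : Submodule k (W N) := Submodule.comap ((g 0 N h0N) : W N →ₗ[k] W 0) L₀ with hK
  have hKc : LinearlyCompact k K := hproper 0 N h0N L₀ hL₀c
  haveI hfin : FiniteDimensional k (↥K ⧸ Q.comap K.subtype) := hKc.2.2 Q hQopen
  have hmemK : ∀ x : ↥L, ((x : ↥(invLimit g)) : ∀ n, W n) N ∈ K := by
    intro x
    have hx0 : ((x : ↥(invLimit g)) : ∀ n, W n) 0 ∈ L₀ := x.2
    have heq : g 0 N h0N (((x : ↥(invLimit g)) : ∀ n, W n) N)
        = ((x : ↥(invLimit g)) : ∀ n, W n) 0 := hmemlim _ 0 N h0N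
    exact Submodule.mem_comap.mpr (by show g 0 N h0N _ ∈ L₀; rw [heq]; exact hx0)
  set ψ : ↥L →ₗ[k] ↥K := LinearMap.codRestrict K
    (((LinearMap.proj N).comp (invLimit g).subtype).comp L.subtype) hmemK with hψ
  set φ : ↥L →ₗ[k] (↥K ⧸ Q.comap K.subtype) := (Q.comap K.subtype).mkQ.comp ψ with hφ
  have hker : LinearMap.ker φ ≤ U.comap L.subtype := by
    intro x hx
    rw [LinearMap.mem_ker, hφ, LinearMap.comp_apply, Submodule.mkQ_apply,
      Submodule.Quotient.mk_eq_zero, Submodule.mem_comap] at hx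
    have hxN : ((x : ↥(invLimit g)) : ∀ n, W n) N ∈ Q := hx
    exact Submodule.mem_comap.mpr (hkey _ hxN)
  exact finiteDimensional_quotient_of_ker_le L U φ hker
end

section
/- Let B be a complete linearly topologized vector space over a discrete field k which admits a countable neighborhood basis of 0 consisting of open linear subspaces, and let A ⊆ B be a closed linear subspace. Then the inclusion A → B admits a continuous linear retraction: there exists a continuous linear map π : B → A with π(a) = a for all a ∈ A. Consequently A has a topological complement: a closed linear subspace S ⊆ B with A ∩ S = {0} and A + S = B such that the addition map A × S → B is a topological isomorphism. -/
open Filter Topology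

section aux
variable {k : Type*} [Field k] {B : Type*} [AddCommGroup B] [Module k B]

lemma aux_exists_compl_le (A Q : Submodule k B) (hQA : Q ≤ A) :
    ∃ T : Submodule k B, T ≤ A ∧ T ⊓ Q = ⊥ ∧ T ⊔ Q = A := by
  obtain ⟨T', hT'⟩ := Submodule.exists_isCompl (Q.comap A.subtype)
  have hmapQ : (Q.comap A.subtype).map A.subtype = Q := by
    rw [Submodule.map_comap_subtype, inf_eq_right.mpr hQA]
  refine ⟨T'.map A.subtype, Submodule.map_subtype_le _ _, ?_, ?_⟩
  · rw [← hmapQ, ← Submodule.map_inf A.subtype A.injective_subtype, inf_comm,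
      hT'.inf_eq_bot, Submodule.map_bot]
  · rw [← hmapQ, ← Submodule.map_sup, sup_comm, hT'.sup_eq_top, Submodule.map_top,
      Submodule.range_subtype]

lemma aux_step (A W V : Submodule k B) (hVW : V ≤ W) (f : B →ₗ[k] B)
    (hfA : ∀ x, f x ∈ A) (h1 : ∀ a ∈ A, a - f a ∈ W) (h2 : ∀ x ∈ W, f x ∈ W) :
    ∃ g : B →ₗ[k] B, (∀ x, g x ∈ A) ∧ (∀ a ∈ A, a - g a ∈ V) ∧
      (∀ x ∈ V, g x = 0) ∧ (∀ x, g x - f x ∈ W) := by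
  obtain ⟨T, hTA, hTQ_inf, hTQ_sup⟩ := aux_exists_compl_le A (A ⊓ V) inf_le_left
  set Q : Submodule k B := A ⊓ V with hQ
  set S : Submodule k B := A ⊔ V with hS
  obtain ⟨R, hR⟩ := Submodule.exists_isCompl S
  have hTS : T ≤ S := hTA.trans le_sup_left
  have hVS : V ≤ S := le_sup_right
  have hAS : A ≤ S := le_sup_left
  -- IsCompl T (V ⊔ R)
  have hSVR : S ⊓ (V ⊔ R) = V := by
    rw [sup_comm V R, ← inf_sup_assoc_of_le R hVS, hR.inf_eq_bot, bot_sup_eq]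
  have hcompl1 : IsCompl T (V ⊔ R) := by
    constructor
    · rw [disjoint_iff]
      have : T ⊓ (V ⊔ R) ≤ T ⊓ Q := by
        refine le_inf inf_le_left ?_
        refine le_inf (inf_le_left.trans hTA) ?_
        calc T ⊓ (V ⊔ R) ≤ S ⊓ (V ⊔ R) := inf_le_inf_right _ hTS
          _ = V := hSVR
      exact le_bot_iff.mp (this.trans hTQ_inf.le)
    · rw [codisjoint_iff, ← sup_assoc]
      have hTV : T ⊔ V = S := by
        rw [hS, ← hTQ_sup, sup_assoc, sup_eq_right.mpr (inf_le_right : Q ≤ V)]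
      rw [hTV, hR.sup_eq_top]
  have hcompl2 : IsCompl R S := hR.symm
  set prT := T.projectionOnto (V ⊔ R) hcompl1
  set prR := R.projectionOnto S hcompl2
  set g : B →ₗ[k] B := T.subtype ∘ₗ prT + f ∘ₗ (R.subtype ∘ₗ prR) with hg
  have hgapply : ∀ x, g x = (prT x : B) + f (prR x : B) := fun x => rfl
  have hgV : ∀ x ∈ V, g x = 0 := by
    intro x hx
    rw [hgapply, Submodule.projectionOnto_apply_of_mem_right hcompl1 ((le_sup_left : V ≤ V ⊔ R) hx),
      Submodule.projectionOnto_apply_of_mem_right hcompl2 (hVS hx)]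
    simp
  have hgT : ∀ t ∈ T, g t = t := by
    intro t ht
    have h1' : prT t = ⟨t, ht⟩ := Submodule.linearProjOfIsCompl_apply_left hcompl1 ⟨t, ht⟩
    have h2' : prR t = 0 := Submodule.projectionOnto_apply_of_mem_right hcompl2 (hTS ht)
    rw [hgapply, h1', h2']
    simp
  have hgA : ∀ x, g x ∈ A := by
    intro x
    rw [hgapply]
    exact A.add_mem (hTA (prT x).2) (hfA _)
  have hgR : ∀ r ∈ R, g r = f r := by
    intro r hr
    have h1' : prT r = 0 :=
      Submodule.projectionOnto_apply_of_mem_right hcompl1 ((le_sup_right : R ≤ V ⊔ R) hr)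
    have h2' : prR r = ⟨r, hr⟩ := Submodule.linearProjOfIsCompl_apply_left hcompl2 ⟨r, hr⟩
    rw [hgapply, h1', h2']
    simp
  refine ⟨g, hgA, ?_, hgV, ?_⟩
  · intro a ha
    rw [← hTQ_sup] at ha
    obtain ⟨t, ht, q, hq, rfl⟩ := Submodule.mem_sup.mp ha
    have : g (t + q) = t := by
      rw [map_add, hgT t ht, hgV q ((inf_le_right : A ⊓ V ≤ V) hq), add_zero]
    rw [this, add_sub_cancel_left]
    exact (inf_le_right : A ⊓ V ≤ V) hq
  · intro x
    have hx : x ∈ S ⊔ R := by rw [hR.sup_eq_top]; exact Submodule.mem_top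
    obtain ⟨s, hs, r, hr, rfl⟩ := Submodule.mem_sup.mp hx
    obtain ⟨a, ha, v, hv, rfl⟩ := Submodule.mem_sup.mp hs
    have ha' := ha
    rw [← hTQ_sup] at ha'
    obtain ⟨t, ht, q, hq, rfl⟩ := Submodule.mem_sup.mp ha'
    have hgx : g (t + q + v + r) = t + f r := by
      rw [map_add, map_add, map_add, hgT t ht, hgV q ((inf_le_right : A ⊓ V ≤ V) hq), hgV v hv, hgR r hr]
      abel
    have hfx : f (t + q + v + r) = f t + f q + f v + f r := by
      rw [map_add, map_add, map_add]
    have key : g (t + q + v + r) - f (t + q + v + r) = (t - f t) - f q - f v := by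
      rw [hgx, hfx]; abel
    rw [key]
    exact W.sub_mem (W.sub_mem (h1 t (hTA ht)) (h2 q (hVW ((inf_le_right : A ⊓ V ≤ V) hq)))) (h2 v (hVW hv))

end aux

/-- If `B` is a complete linearly topologized vector space over a discrete field with a
countable neighborhood basis of `0` consisting of open linear subspaces, then every
closed linear subspace `A ⊆ B` admits a continuous linear retraction `π : B → A`, and
consequently a topological complement: a closed linear subspace `S` with `A ∩ S = 0`
and `A + S = B` such that the addition map `A × S → B` is a topological isomorphism. -/
theorem closed_subspace_retraction_and_complement
    {k : Type*} [Field k] [TopologicalSpace k] [DiscreteTopology k]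
    {B : Type*} [AddCommGroup B] [Module k B] [UniformSpace B]
    [IsUniformAddGroup B] [ContinuousSMul k B] [T2Space B]
    (hB : IsLinearlyTopologized k B)
    (hcomplete : CompleteSpace B)
    (hcount : ∃ U : ℕ → Submodule k B, (∀ n, IsOpen ((U n) : Set B)) ∧
      (nhds (0 : B)).HasBasis (fun _ : ℕ => True) (fun n => ((U n) : Set B)))
    (A : Submodule k B) (hA : IsClosed (A : Set B)) :
    (∃ π : B →L[k] ↥A, ∀ a : ↥A, π (a : B) = a) ∧
    (∃ S : Submodule k B, IsClosed (S : Set B) ∧ A ⊓ S = ⊥ ∧ A ⊔ S = ⊤ ∧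
      Function.Bijective (fun p : ↥A × ↥S => (p.1 : B) + (p.2 : B)) ∧
      Continuous (fun p : ↥A × ↥S => (p.1 : B) + (p.2 : B)) ∧
      IsOpenMap (fun p : ↥A × ↥S => (p.1 : B) + (p.2 : B))) := by
  classical
  obtain ⟨U, hUopen, hUb⟩ := hcount
  -- Build an antitone open basis of submodules
  set V : ℕ → Submodule k B := fun n => Nat.rec (U 0) (fun m Vm => Vm ⊓ U (m + 1)) n with hV
  have hVsucc : ∀ n, V (n + 1) = V n ⊓ U (n + 1) := fun n => rfl
  have hVanti : Antitone V := antitone_nat_of_succ_le fun n => by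
    rw [hVsucc]; exact inf_le_left
  have hVleU : ∀ n, V n ≤ U n := by
    intro n
    cases n with
    | zero => exact le_rfl
    | succ m => rw [hVsucc]; exact inf_le_right
  have hVopen : ∀ n, IsOpen ((V n : Submodule k B) : Set B) := by
    intro n
    induction n with
    | zero => exact hUopen 0
    | succ m ih =>
      have : ((V (m + 1) : Submodule k B) : Set B) = (V m : Set B) ∩ (U (m + 1) : Set B) := by
        rw [hVsucc]; rfl
      rw [this]; exact ih.inter (hUopen (m + 1))
  have hVb : (nhds (0 : B)).HasBasis (fun _ : ℕ => True) (fun n => ((V n) : Set B)) := by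
    refine hUb.to_hasBasis' (fun i _ => ⟨i, trivial, hVleU i⟩) (fun i _ => ?_)
    exact (hVopen i).mem_nhds (V i).zero_mem
  have hVclosed : ∀ n, IsClosed ((V n : Submodule k B) : Set B) := fun n =>
    AddSubgroup.isClosed_of_isOpen (V n).toAddSubgroup (hVopen n)
  -- The approximation property
  set P : ℕ → (B →ₗ[k] B) → Prop := fun n f =>
    (∀ x, f x ∈ A) ∧ (∀ a ∈ A, a - f a ∈ V n) ∧ (∀ x ∈ V n, f x = 0) with hP
  have hbase : ∃ f : B →ₗ[k] B, P 0 f := by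
    obtain ⟨g, hg1, hg2, hg3, _⟩ := aux_step A ⊤ (V 0) le_top 0
      (fun x => A.zero_mem) (fun a _ => Submodule.mem_top) (fun x _ => Submodule.zero_mem ⊤)
    exact ⟨g, hg1, hg2, hg3⟩
  have hchain : ∀ n (f : {f : B →ₗ[k] B // P n f}),
      ∃ g : B →ₗ[k] B, P (n + 1) g ∧ ∀ x, g x - f.1 x ∈ V n := by
    rintro n ⟨f, hf1, hf2, hf3⟩
    obtain ⟨g, hg1, hg2, hg3, hg4⟩ := aux_step A (V n) (V (n + 1))
      (hVanti (Nat.le_succ n)) f hf1 hf2 (fun x hx => by rw [hf3 x hx]; exact (V n).zero_mem)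
    exact ⟨g, ⟨hg1, hg2, hg3⟩, hg4⟩
  choose gnext hgP hgrel using hchain
  set F : ∀ n, {f : B →ₗ[k] B // P n f} := fun n =>
    Nat.rec ⟨hbase.choose, hbase.choose_spec⟩ (fun m Fm => ⟨gnext m Fm, hgP m Fm⟩) n with hF
  set f : ℕ → (B →ₗ[k] B) := fun n => (F n).1 with hf
  have hfP : ∀ n, P n (f n) := fun n => (F n).2
  have hfrel : ∀ n x, f (n + 1) x - f n x ∈ V n := fun n x => hgrel n (F n) x
  have hfle : ∀ m n, m ≤ n → ∀ x, f n x - f m x ∈ V m := by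
    intro m n hmn x
    induction n, hmn using Nat.le_induction with
    | base => rw [sub_self]; exact (V m).zero_mem
    | succ n hmn ih =>
      have : f (n + 1) x - f m x = (f (n + 1) x - f n x) + (f n x - f m x) := by abel
      rw [this]
      exact (V m).add_mem (hVanti hmn (hfrel n x)) ih
  -- Cauchy and limit
  have h𝓤 : (uniformity B).HasBasis (fun _ : ℕ => True)
      (fun n => {p : B × B | p.2 - p.1 ∈ V n}) := by
    rw [uniformity_eq_comap_nhds_zero B]
    exact hVb.comap _
  have hcauchy : ∀ x : B, CauchySeq (fun n => f n x) := by
    intro x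
    rw [h𝓤.cauchySeq_iff']
    refine fun i _ => ⟨i, fun n hn => ?_⟩
    show f i x - f n x ∈ V i
    have h' := (V i).neg_mem (hfle i n hn x)
    rwa [neg_sub] at h'
  choose π hπ using fun x => cauchySeq_tendsto_of_complete (hcauchy x)
  have hπA : ∀ x, π x ∈ A := fun x =>
    hA.mem_of_tendsto (hπ x) (Filter.Eventually.of_forall fun n => (hfP n).1 x)
  have hπadd : ∀ x y, π (x + y) = π x + π y := by
    intro x y
    refine tendsto_nhds_unique (hπ (x + y)) ?_
    have : (fun n => f n (x + y)) = fun n => f n x + f n y := by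
      funext n; rw [map_add]
    rw [this]
    exact (hπ x).add (hπ y)
  have hπsmul : ∀ (c : k) x, π (c • x) = c • π x := by
    intro c x
    refine tendsto_nhds_unique (hπ (c • x)) ?_
    have : (fun n => f n (c • x)) = fun n => c • f n x := by
      funext n; rw [map_smul]
    rw [this]
    exact (hπ x).const_smul c
  set πL : B →ₗ[k] B :=
    { toFun := π, map_add' := hπadd, map_smul' := hπsmul } with hπL
  have hπfix : ∀ a ∈ A, π a = a := by
    intro a ha
    refine tendsto_nhds_unique (hπ a) ?_
    have key : Filter.Tendsto (fun n => f n a - a) Filter.atTop (nhds 0) := by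
      rw [hVb.tendsto_right_iff]
      intro i _
      filter_upwards [Filter.eventually_ge_atTop i] with n hn
      have h' := (V n).neg_mem ((hfP n).2.1 a ha)
      rw [neg_sub] at h'
      exact hVanti hn h'
    have := key.add (tendsto_const_nhds (x := a))
    simpa using this
  have hπsmall : ∀ n, ∀ x ∈ V n, π x ∈ V n := by
    intro n x hx
    refine (hVclosed n).mem_of_tendsto (hπ x) ?_
    filter_upwards [Filter.eventually_ge_atTop n] with m hm
    have h1 : f m x - f n x ∈ V n := hfle n m hm x
    have h2 : f n x ∈ V n := by rw [(hfP n).2.2 x hx]; exact (V n).zero_mem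
    have h4 : (f m x - f n x) + f n x ∈ V n := (V n).add_mem h1 h2
    simpa using h4
  have hπcont : Continuous π := by
    have h0 : ContinuousAt πL 0 := by
      have hmap0 : πL 0 = 0 := map_zero πL
      rw [ContinuousAt, hmap0]
      rw [hVb.tendsto_iff hVb]
      exact fun i _ => ⟨i, trivial, fun x hx => hπsmall i x hx⟩
    exact continuous_of_continuousAt_zero πL h0
  have hπidem : ∀ x, π (π x) = π x := fun x => hπfix (π x) (hπA x)
  -- the retraction
  have retr : ∃ πc : B →L[k] ↥A, ∀ a : ↥A, πc (a : B) = a := by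
    refine ⟨⟨πL.codRestrict A hπA, ?_⟩, ?_⟩
    · exact hπcont.subtype_mk hπA
    · intro a
      exact Subtype.ext (hπfix a a.2)
  refine ⟨retr, ?_⟩
  -- the complement
  set S := LinearMap.ker πL with hSdef
  have hSmem : ∀ x, x ∈ S ↔ π x = 0 := fun x => LinearMap.mem_ker
  have hxsub : ∀ x : B, x - π x ∈ S := by
    intro x
    rw [hSmem]
    show π (x - π x) = 0
    have : π (x - π x) = π x - π (π x) := map_sub πL x (π x)
    rw [this, hπidem, sub_self]
  have hinf : A ⊓ S = ⊥ := by
    rw [eq_bot_iff]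
    rintro x ⟨hxA, hxS⟩
    have := hπfix x hxA
    rw [(hSmem x).mp hxS] at this
    simpa using this.symm
  have hsup : A ⊔ S = ⊤ := by
    rw [eq_top_iff]
    intro x _
    have : x = π x + (x - π x) := by abel
    rw [this]
    exact Submodule.add_mem_sup (hπA x) (hxsub x)
  have hSclosed : IsClosed (S : Set B) := by
    have : (S : Set B) = π ⁻¹' {0} := by
      ext x; simp [hSmem x]
    rw [this]
    exact IsClosed.preimage hπcont isClosed_singleton
  set add : ↥A × ↥S → B := fun p => (p.1 : B) + (p.2 : B) with hadd
  have hπ_on : ∀ p : ↥A × ↥S, π (add p) = (p.1 : B) := by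
    intro p
    have : π (add p) = π p.1 + π p.2 := hπadd _ _
    rw [this, hπfix p.1 p.1.2, (hSmem _).mp p.2.2, add_zero]
  have hbij : Function.Bijective add := by
    constructor
    · intro p q hpq
      have h1 : (p.1 : B) = q.1 := by
        have := hπ_on p
        rw [hpq, hπ_on q] at this
        exact this.symm
      have h2 : (p.2 : B) = q.2 := by
        have := hpq
        rw [hadd] at this
        simp only at this
        have : (p.1 : B) + p.2 = (q.1 : B) + q.2 := this
        rw [h1] at this
        exact add_left_cancel this
      exact Prod.ext (Subtype.ext h1) (Subtype.ext h2)
    · intro x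
      refine ⟨(⟨π x, hπA x⟩, ⟨x - π x, hxsub x⟩), ?_⟩
      show π x + (x - π x) = x
      abel
  have hcont : Continuous add :=
    (continuous_subtype_val.comp continuous_fst).add
      (continuous_subtype_val.comp continuous_snd)
  have hopen : IsOpenMap add := by
    set ginv : B → ↥A × ↥S := fun x => (⟨π x, hπA x⟩, ⟨x - π x, hxsub x⟩) with hginv
    have hginvcont : Continuous ginv := by
      refine Continuous.prodMk ?_ ?_
      · exact hπcont.subtype_mk _
      · exact (continuous_id.sub hπcont).subtype_mk _
    intro O hO
    have himg : add '' O = ginv ⁻¹' O := by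
      ext x
      constructor
      · rintro ⟨p, hp, rfl⟩
        have e1 : π (add p) = (p.1 : B) := hπ_on p
        have e2 : add p - π (add p) = (p.2 : B) := by rw [e1]; simp [hadd]
        have : ginv (add p) = p := by
          refine Prod.ext (Subtype.ext ?_) (Subtype.ext ?_)
          · exact e1
          · exact e2
        show ginv (add p) ∈ O
        rw [this]; exact hp
      · intro hx
        refine ⟨ginv x, hx, ?_⟩
        show π x + (x - π x) = x
        abel
    rw [himg]
    exact hO.preimage hginvcont
  exact ⟨S, hSclosed, hinf, hsup, hbij, hcont, hopen⟩
end

section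
/- Let k be a discrete field, B a linearly topologized vector space over k, and A ⊆ B a linear subspace endowed with the induced topology. Then every continuous linear map f : A → k extends to a continuous linear map g : B → k with g restricted to A equal to f; in other words, the canonical restriction map B* → A* between topological duals is surjective. -/
open Filter Topology

/-- Hahn-Banach for linearly topologized vector spaces over a discrete field: every
continuous linear functional on a linear subspace `A ⊆ B` (with the induced topology)
extends to a continuous linear functional on `B`; i.e. the restriction map `B* → A*`
is surjective. -/
theorem hahn_banach_extension
    {k : Type*} [Field k] [TopologicalSpace k] [DiscreteTopology k]
    {B : Type*} [AddCommGroup B] [Module k B] [TopologicalSpace B]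
    [IsTopologicalAddGroup B] [ContinuousSMul k B] [T2Space B]
    (hB : IsLinearlyTopologized k B)
    (A : Submodule k B) (f : ↥A →L[k] k) :
    ∃ g : B →L[k] k, ∀ a : ↥A, g (a : B) = f a := by
  -- Step 1: find an open submodule U of B with A ∩ U ⊆ ker f.
  have h0 : f ⁻¹' {0} ∈ nhds (0 : ↥A) := by
    have := (f.continuous.continuousAt (x := (0 : ↥A))).preimage_mem_nhds
      (t := {0}) (by rw [map_zero]; exact (isOpen_discrete _).mem_nhds rfl)
    simpa using this
  rw [nhds_induced] at h0
  obtain ⟨s, hs, hsub⟩ := Filter.mem_comap.mp h0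
  obtain ⟨U, hUopen, hUs⟩ := hB.mem_iff.mp hs
  -- key: a ∈ A, a ∈ U → f a = 0
  have hker : ∀ a : ↥A, (a : B) ∈ U → f a = 0 := fun a ha => hsub (hUs ha)
  -- Step 2: algebraic extension vanishing on U.
  set q : B →ₗ[k] B ⧸ U := U.mkQ
  set p : ↥A →ₗ[k] B ⧸ U := q ∘ₗ A.subtype
  have hkp : LinearMap.ker p ≤ LinearMap.ker (f : ↥A →ₗ[k] k) := by
    intro a ha
    have : (a : B) ∈ U := by
      simpa [p, q, Submodule.Quotient.mk_eq_zero] using ha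
    simpa using hker a this
  set f₁ : (↥A ⧸ LinearMap.ker p) →ₗ[k] k := (LinearMap.ker p).liftQ (f : ↥A →ₗ[k] k) hkp
  set e := p.quotKerEquivRange
  set fbar : ↥(LinearMap.range p) →ₗ[k] k := f₁ ∘ₗ (e.symm : _ →ₗ[k] _)
  obtain ⟨G, hG⟩ := fbar.exists_extend
  set g₀ : B →ₗ[k] k := G ∘ₗ q
  have hgU : ∀ u ∈ U, g₀ u = 0 := by
    intro u hu
    simp [g₀, q, (Submodule.Quotient.mk_eq_zero U).mpr hu]
  have hgA : ∀ a : ↥A, g₀ (a : B) = f a := by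
    intro a
    have hmem : p a ∈ LinearMap.range p := LinearMap.mem_range_self p a
    have h1 : g₀ (a : B) = G ((LinearMap.range p).subtype ⟨p a, hmem⟩) := rfl
    have h4 := LinearMap.congr_fun hG ⟨p a, hmem⟩
    simp only [LinearMap.comp_apply] at h4
    rw [h1, h4]
    have h2 : e (Submodule.Quotient.mk a) = ⟨p a, hmem⟩ :=
      Subtype.ext (p.quotKerEquivRange_apply_mk a)
    have h3 : e.symm ⟨p a, hmem⟩ = Submodule.Quotient.mk a := by
      rw [← h2, LinearEquiv.symm_apply_apply]
    simp [fbar, h3, f₁]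
  -- Step 3: continuity.
  have hcont : Continuous g₀ := by
    apply continuous_of_continuousAt_zero g₀.toAddMonoidHom
    have ht : Filter.Tendsto g₀ (nhds 0) (pure (0 : k)) :=
      tendsto_pure.mpr (Filter.mem_of_superset (hUopen.mem_nhds U.zero_mem)
        (fun u hu => hgU u hu))
    simpa [ContinuousAt, map_zero] using ht.mono_right (pure_le_nhds 0)
  exact ⟨⟨g₀, hcont⟩, hgA⟩
end

section
/- Let k be a field. For all i, j ∈ ℕ let V_{i,j} be a finite dimensional k-vector space, with linear maps α_{ij} : V_{i+1,j} → V_{i,j} and β_{ij} : V_{i,j} → V_{i,j+1} satisfying α_{i,j+1} ∘ β_{i+1,j} = β_{i,j} ∘ α_{i,j} for all i, j. Let (V_j)_{j∈ℕ} be finite dimensional k-vector spaces with linear maps f_j : V_j → V_{j+1}, and (W_i)_{i∈ℕ} finite dimensional k-vector spaces with linear maps g_i : W_{i+1} → W_i. Suppose given, for all i, j, injective linear maps ι_{ij} : V_j → V_{i,j} and surjective linear maps π_{ij} : V_{i,j} → W_i with ker π_{ij} = range ι_{ij} (so that 0 → V_j → V_{i,j} → W_i → 0 is exact), satisfying the compatibilities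 α_{ij} ∘ ι_{i+1,j} = ι_{ij}, π_{ij} ∘ α_{ij} = g_i ∘ π_{i+1,j}, β_{ij} ∘ ι_{ij} = ι_{i,j+1} ∘ f_j, and π_{i,j+1} ∘ β_{ij} = π_{ij}. Then there exist linear isomorphisms φ_{ij} : V_{i,j} → V_j × W_i such that φ_{ij}(ι_{ij}(v)) = (v, 0) for all v ∈ V_j, the second component of φ_{ij} equals π_{ij}, and the structure maps are intertwined as φ_{ij} ∘ α_{ij} = (id_{V_j} × g_i) ∘ φ_{i+1,j} and φ_{i,j+1} ∘ β_{ij} = (f_j × id_{W_i}) ∘ φ_{ij}. In particular, the bidirected system (V_{i,j}) is isomorphic to the system (V_j × W_i) with structure maps id × g_i and f_j × id. -/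
/-- Splitting of a bidirected system of finite dimensional vector spaces: given a short
exact sequence of bidirected systems `0 → V_j → V_{i,j} → W_i → 0`, the bidirected
system `(V_{i,j})` is isomorphic to the system `(V_j × W_i)` with structure maps
`id × g_i` and `f_j × id`. -/
theorem bidirected_system_splitting
    {k : Type*} [Field k]
    (V : ℕ → ℕ → Type*) [∀ i j, AddCommGroup (V i j)] [∀ i j, Module k (V i j)]
    [∀ i j, FiniteDimensional k (V i j)]
    (Vd : ℕ → Type*) [∀ j, AddCommGroup (Vd j)] [∀ j, Module k (Vd j)]
    [∀ j, FiniteDimensional k (Vd j)]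
    (W : ℕ → Type*) [∀ i, AddCommGroup (W i)] [∀ i, Module k (W i)]
    [∀ i, FiniteDimensional k (W i)]
    (α : ∀ i j, V (i + 1) j →ₗ[k] V i j)
    (β : ∀ i j, V i j →ₗ[k] V i (j + 1))
    (hsq : ∀ (i j : ℕ) (x : V (i + 1) j), α i (j + 1) (β (i + 1) j x) = β i j (α i j x))
    (f : ∀ j, Vd j →ₗ[k] Vd (j + 1))
    (g : ∀ i, W (i + 1) →ₗ[k] W i)
    (ι : ∀ i j, Vd j →ₗ[k] V i j) (hι : ∀ i j, Function.Injective (ι i j))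
    (π : ∀ i j, V i j →ₗ[k] W i) (hπ : ∀ i j, Function.Surjective (π i j))
    (hexact : ∀ i j, LinearMap.ker (π i j) = LinearMap.range (ι i j))
    (hcompat₁ : ∀ (i j : ℕ) (v : Vd j), α i j (ι (i + 1) j v) = ι i j v)
    (hcompat₂ : ∀ (i j : ℕ) (x : V (i + 1) j), π i j (α i j x) = g i (π (i + 1) j x))
    (hcompat₃ : ∀ (i j : ℕ) (v : Vd j), β i j (ι i j v) = ι i (j + 1) (f j v))
    (hcompat₄ : ∀ (i j : ℕ) (x : V i j), π i (j + 1) (β i j x) = π i j x) :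
    ∃ φ : ∀ i j, V i j ≃ₗ[k] (Vd j × W i),
      (∀ (i j : ℕ) (v : Vd j), φ i j (ι i j v) = (v, 0)) ∧
      (∀ (i j : ℕ) (x : V i j), (φ i j x).2 = π i j x) ∧
      (∀ (i j : ℕ) (x : V (i + 1) j),
        φ i j (α i j x) = ((φ (i + 1) j x).1, g i (φ (i + 1) j x).2)) ∧
      (∀ (i j : ℕ) (x : V i j),
        φ i (j + 1) (β i j x) = (f j (φ i j x).1, (φ i j x).2)) := by
  classical
  -- π kills the image of ι
  have πι : ∀ i j v, π i j (ι i j v) = 0 := by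
    intro i j v
    have h : ι i j v ∈ LinearMap.ker (π i j) := by
      rw [hexact]; exact ⟨v, rfl⟩
    exact h
  -- step: extend a retraction along β
  have step : ∀ j (r : V 0 j →ₗ[k] Vd j), (∀ v, r (ι 0 j v) = v) →
      ∃ r' : V 0 (j+1) →ₗ[k] Vd (j+1),
        (∀ v, r' (ι 0 (j+1) v) = v) ∧ ∀ x, r' (β 0 j x) = f j (r x) := by
    intro j r hr
    obtain ⟨r0, hr0⟩ := (ι 0 (j+1)).exists_leftInverse_of_injective
      (LinearMap.ker_eq_bot.2 (hι 0 (j+1)))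
    have hr0' : ∀ v, r0 (ι 0 (j+1) v) = v := fun v =>
      congrFun (congrArg (fun m => m.toFun) hr0) v
    obtain ⟨s, hs⟩ := (π 0 j).exists_rightInverse_of_surjective
      (LinearMap.range_eq_top.2 (hπ 0 j))
    have hs' : ∀ w, π 0 j (s w) = w := fun w =>
      congrFun (congrArg (fun m => m.toFun) hs) w
    -- h vanishes on range ι
    set h : V 0 j →ₗ[k] Vd (j+1) := (f j).comp r - r0.comp (β 0 j) with hh
    have hkill : ∀ x ∈ LinearMap.ker (π 0 j), h x = 0 := by
      intro x hx
      rw [hexact] at hx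
      obtain ⟨u, rfl⟩ := hx
      simp only [hh, LinearMap.sub_apply, LinearMap.comp_apply, hr, hcompat₃, hr0']
      exact sub_self _
    refine ⟨r0 + (h.comp s).comp (π 0 (j+1)), ?_, ?_⟩
    · intro v
      simp only [LinearMap.add_apply, LinearMap.comp_apply, hr0', πι, map_zero]
      rw [add_zero]
    · intro x
      have key : h (s (π 0 j x)) = h x := by
        have hker : s (π 0 j x) - x ∈ LinearMap.ker (π 0 j) := by
          simp [LinearMap.mem_ker, map_sub, hs']
        have hz := hkill _ hker
        rw [map_sub, sub_eq_zero] at hz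
        exact hz
      simp only [LinearMap.add_apply, LinearMap.comp_apply, hcompat₄, key]
      simp only [hh, LinearMap.sub_apply, LinearMap.comp_apply]
      abel
  -- retractions on the row i = 0, built recursively in j
  obtain ⟨rb, hrb⟩ := (ι 0 0).exists_leftInverse_of_injective
    (LinearMap.ker_eq_bot.2 (hι 0 0))
  have hrb' : ∀ v, rb (ι 0 0 v) = v := fun v =>
    congrFun (congrArg (fun m => m.toFun) hrb) v
  let ρ0 : ∀ j, {r : V 0 j →ₗ[k] Vd j // ∀ v, r (ι 0 j v) = v} := fun j =>
    Nat.rec ⟨rb, hrb'⟩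
      (fun j p => ⟨(step j p.1 p.2).choose, (step j p.1 p.2).choose_spec.1⟩) j
  have hρ0β : ∀ j x, (ρ0 (j+1)).1 (β 0 j x) = f j ((ρ0 j).1 x) := fun j x =>
    (step j (ρ0 j).1 (ρ0 j).2).choose_spec.2 x
  -- transition maps down to row 0
  let A : ∀ i j, V i j →ₗ[k] V 0 j := fun i =>
    Nat.rec (fun _ => LinearMap.id) (fun i Ai j => (Ai j).comp (α i j)) i
  have hAs : ∀ i j (x : V (i+1) j), A (i+1) j x = A i j (α i j x) := fun _ _ _ => rfl
  have hAι : ∀ i j v, A i j (ι i j v) = ι 0 j v := by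
    intro i
    induction i with
    | zero => intro j v; rfl
    | succ i ih => intro j v; rw [hAs, hcompat₁]; exact ih j v
  have hAβ : ∀ i j (x : V i j), A i (j+1) (β i j x) = β 0 j (A i j x) := by
    intro i
    induction i with
    | zero => intro j x; rfl
    | succ i ih => intro j x; rw [hAs, hsq, ih, hAs]
  -- the retractions
  let ρ : ∀ i j, V i j →ₗ[k] Vd j := fun i j => ((ρ0 j).1).comp (A i j)
  have hρι : ∀ i j v, ρ i j (ι i j v) = v := by
    intro i j v
    show (ρ0 j).1 (A i j (ι i j v)) = v
    rw [hAι]; exact (ρ0 j).2 v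
  have hρα : ∀ i j (x : V (i+1) j), ρ i j (α i j x) = ρ (i+1) j x := by
    intro i j x; rfl
  have hρβ : ∀ i j (x : V i j), ρ i (j+1) (β i j x) = f j (ρ i j x) := by
    intro i j x
    show (ρ0 (j+1)).1 (A i (j+1) (β i j x)) = f j ((ρ0 j).1 (A i j x))
    rw [hAβ, hρ0β]
  -- the isomorphisms
  have hbij : ∀ i j, Function.Bijective fun x : V i j => ((ρ i j x, π i j x) : Vd j × W i) := by
    intro i j
    constructor
    · intro x y hxy
      have h1 : ρ i j x = ρ i j y := congrArg Prod.fst hxy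
      have h2 : π i j x = π i j y := congrArg Prod.snd hxy
      have hk : x - y ∈ LinearMap.ker (π i j) := by
        simp [LinearMap.mem_ker, map_sub, h2]
      rw [hexact] at hk
      obtain ⟨u, hu⟩ := hk
      have : u = 0 := by
        have := congrArg (ρ i j) hu
        rw [hρι, map_sub, h1, sub_self] at this
        exact this
      rw [this, map_zero] at hu
      exact sub_eq_zero.1 hu.symm
    · rintro ⟨v, w⟩
      obtain ⟨x0, hx0⟩ := hπ i j w
      refine ⟨x0 + ι i j (v - ρ i j x0), ?_⟩
      simp [map_add, hρι, πι, hx0]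
  let φ : ∀ i j, V i j ≃ₗ[k] (Vd j × W i) := fun i j =>
    LinearEquiv.ofBijective ((ρ i j).prod (π i j)) (hbij i j)
  have hφ : ∀ i j (x : V i j), φ i j x = (ρ i j x, π i j x) := fun i j x => rfl
  refine ⟨φ, ?_, ?_, ?_, ?_⟩
  · intro i j v
    rw [hφ, hρι, πι]
  · intro i j x
    rw [hφ]
  · intro i j x
    simp only [hφ, hρα, hcompat₂]
  · intro i j x
    simp only [hφ, hρβ, hcompat₄]
end
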